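/- arXiv:1408.1973 — 6 statements merged into one kernel-verified Lean document; each statement's English description precedes it below -/
import Mathlib

section
/- For every Borel graph G = (V, 𝓑, E) of finite maximum degree and every k ∈ ℕ, there exist m ∈ ℕ and a Borel function ℓ : V → {1, …, m} such that each fiber ℓ^{-1}(i) is k-sparse. -/
open MeasureTheory Set
open scoped ENNReal

namespace CLP

universe u

variable {V : Type u}

/-- The set of neighbours of `x` in the (symmetric) edge set `E ⊆ V × V`. -/
def nbrs (E : Set (V × V)) (x : V) : Set V := {y | (x, y) ∈ E}

/-- The number of edges from `x` into the set `Y`. -/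
noncomputable def degIn (E : Set (V × V)) (Y : Set V) (x : V) : ℕ := (nbrs E x ∩ Y).ncard

/-- The edge set is symmetric. -/
def IsSymm (E : Set (V × V)) : Prop := ∀ x y : V, (x, y) ∈ E → (y, x) ∈ E

/-- The edge set is irreflexive (no loops). -/
def Irrefl (E : Set (V × V)) : Prop := ∀ x : V, (x, x) ∉ E

/-- Every vertex has finitely many neighbours, at most `d` of them. -/
def MaxDegLE (E : Set (V × V)) (d : ℕ) : Prop :=
  ∀ x : V, (nbrs E x).Finite ∧ (nbrs E x).ncard ≤ d

/-- A matching: a symmetric set of pairwise disjoint edges. -/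
def IsMatching (M : Set (V × V)) : Prop :=
  IsSymm M ∧ ∀ x y z : V, (x, y) ∈ M → (x, z) ∈ M → y = z

/-- The set of vertices covered by at least one edge of `M`. -/
def coveredVerts (M : Set (V × V)) : Set V := {x | ∃ y, (x, y) ∈ M}

/-- `WalkLen E n x y`: there is a walk of length exactly `n` from `x` to `y` in `E`. -/
def WalkLen (E : Set (V × V)) : ℕ → V → V → Prop
  | 0, x, y => x = y
  | n + 1, x, y => ∃ z, (x, z) ∈ E ∧ WalkLen E n z y

/-- Graph distance between `x` and `y` is at most `r`. -/
def DistLE (E : Set (V × V)) (r : ℕ) (x y : V) : Prop := ∃ n ≤ r, WalkLen E n x y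

/-- `x` and `y` lie in the same connectivity component. -/
def Reach (E : Set (V × V)) (x y : V) : Prop := ∃ n, WalkLen E n x y

/-- The connectivity component of `x`. -/
def component (E : Set (V × V)) (x : V) : Set V := {y | Reach E x y}

/-- A set `X` of vertices is `r`-sparse: distinct vertices of `X` are at distance `> r`. -/
def RSparse (E : Set (V × V)) (r : ℕ) (X : Set V) : Prop :=
  ∀ x ∈ X, ∀ y ∈ X, x ≠ y → ¬ DistLE E r x y

/-- A set `Q` of vertices is `r`-dense: every vertex is at distance at most `r` from `Q`. -/
def RDense (E : Set (V × V)) (r : ℕ) (Q : Set V) : Prop :=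
  ∀ x : V, ∃ y ∈ Q, DistLE E r x y

/-- The graph has no odd cycles, i.e. no closed walk of odd length. -/
def NoOddCycles (E : Set (V × V)) : Prop :=
  ∀ (n : ℕ) (x : V), ¬ WalkLen E (2 * n + 1) x x

/-- An invertible Borel bijection between Borel subsets of `V` preserving the measure `μ`. -/
structure PartialMPB [MeasurableSpace V] (μ : Measure V) where
  Dom : Set V
  Ran : Set V
  measDom : MeasurableSet Dom
  measRan : MeasurableSet Ran
  toFun : V → V
  invFun : V → V
  meas_toFun : Measurable toFun
  meas_invFun : Measurable invFun
  mapsTo : MapsTo toFun Dom Ran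
  mapsTo_inv : MapsTo invFun Ran Dom
  left_inv : ∀ x ∈ Dom, invFun (toFun x) = x
  right_inv : ∀ y ∈ Ran, toFun (invFun y) = y
  measure_preserving : ∀ S ⊆ Dom, MeasurableSet S → μ (toFun '' S) = μ S

/-- The maps `φ i` generate the edge set `E`:
`{x, y} ∈ E` iff `x ≠ y` and some `φ i` maps `x` to `y` or `y` to `x`. -/
def Generates [MeasurableSpace V] {μ : Measure V} {k : ℕ}
    (φ : Fin k → PartialMPB μ) (E : Set (V × V)) : Prop :=
  ∀ x y : V, (x, y) ∈ E ↔ x ≠ y ∧ ∃ i : Fin k,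
    (x ∈ (φ i).Dom ∧ (φ i).toFun x = y) ∨ (y ∈ (φ i).Dom ∧ (φ i).toFun y = x)

/-- A graphing (measure-preserving graph) on the measurable space `V`. -/
structure Graphing (V : Type u) [MeasurableSpace V] where
  μ : Measure V
  prob : IsProbabilityMeasure μ
  E : Set (V × V)
  measE : MeasurableSet E
  symm : IsSymm E
  irrefl : Irrefl E
  bddDeg : ∃ d : ℕ, MaxDegLE E d
  gen : ∃ (k : ℕ) (φ : Fin k → PartialMPB μ), Generates φ E

/-- The measurable chromatic index of `(E, μ)` is at most `c`: there is a Borel partition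
`E = E₀ ∪ E₁ ∪ ⋯ ∪ E_c` where `E₁, …, E_c` are matchings and the set of vertices covered
by `E₀` is `μ`-null. -/
def ChromIndexLE [MeasurableSpace V] (μ : Measure V) (E : Set (V × V)) (c : ℕ) : Prop :=
  ∃ F : Fin (c + 1) → Set (V × V),
    (∀ i, MeasurableSet (F i)) ∧
    (∀ i, IsSymm (F i)) ∧
    (⋃ i, F i) = E ∧
    (∀ i j, i ≠ j → Disjoint (F i) (F j)) ∧
    (∀ i, i ≠ 0 → IsMatching (F i)) ∧
    μ (coveredVerts (F 0)) = 0

/-! ### Finite graphs, edge colorings and the function `f` -/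

/-- A proper edge coloring of the (symmetric) edge set `E`: it is symmetric on `E` and
adjacent edges receive distinct colors. -/
def ProperEdgeColoring (E : Set (V × V)) (c : V × V → ℕ) : Prop :=
  (∀ x y : V, (x, y) ∈ E → c (x, y) = c (y, x)) ∧
  (∀ x y z : V, (x, y) ∈ E → (x, z) ∈ E → y ≠ z → c (x, y) ≠ c (x, z))

/-- A leaf: an edge one of whose endpoints has degree 1. -/
def IsLeafEdge (E : Set (V × V)) (q : V × V) : Prop :=
  q ∈ E ∧ ((nbrs E q.1).ncard = 1 ∨ (nbrs E q.2).ncard = 1)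

/-- The extension property behind the definition of `f`: in every finite graph
with all degrees at most `d` except at most one vertex of degree `d + 1`, every proper
pre-coloring of at most `d - 1` leaves (counted as `2 * (d - 1)` ordered pairs) extends to a
proper edge coloring of the whole graph using at most `d + fv` colors. -/
def PreColorExt (d fv : ℕ) : Prop :=
  ∀ (W : Type) (E : Set (W × W)), Finite W → IsSymm E → Irrefl E →
    MaxDegLE E (d + 1) →
    (∀ x y : W, d < (nbrs E x).ncard → d < (nbrs E y).ncard → x = y) →
    ∀ (L : Set (W × W)) (p : W × W → ℕ),
      L ⊆ E → IsSymm L → (∀ q ∈ L, IsLeafEdge E q) → L.ncard ≤ 2 * (d - 1) →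
      ProperEdgeColoring L p →
      ∃ c : W × W → ℕ, ProperEdgeColoring E c ∧ (∀ q ∈ L, c q = p q) ∧
        (c '' E).ncard ≤ d + fv

/-- `fDef k` is the least `f` such that `PreColorExt d f` holds for all `1 ≤ d ≤ k`. -/
noncomputable def fDef (k : ℕ) : ℕ :=
  sInf {fv : ℕ | ∀ d : ℕ, 1 ≤ d → d ≤ k → PreColorExt d fv}


/-! ### Auxiliary lemmas for Statement 6 -/

/-- Luzin–Novikov, bounded finite sections version. -/
theorem proj_meas : ∀ (n : ℕ) {X Y : Type u} [MeasurableSpace X] [StandardBorelSpace X]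
    [MeasurableSpace Y] [StandardBorelSpace Y] (R : Set (X × Y)), MeasurableSet R →
    (∀ x, {y | (x, y) ∈ R}.Finite) → (∀ x, {y | (x, y) ∈ R}.ncard ≤ n) →
    MeasurableSet (Prod.fst '' R) := by
  intro n
  induction n with
  | zero =>
    intro X Y _ _ _ _ R hR hfin hcard
    have : R = ∅ := by
      ext ⟨x, y⟩
      simp only [mem_empty_iff_false, iff_false]
      intro hxy
      have h1 : 0 < {y | (x, y) ∈ R}.ncard := (Set.ncard_pos (hfin x)).2 ⟨y, hxy⟩
      have h2 := hcard x
      omega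
    simp [this]
  | succ n IH =>
    intro X Y _ _ _ _ R hR hfin hcard
    obtain ⟨e, he⟩ := MeasureTheory.exists_measurableEmbedding_real Y
    set S : Set ((X × Y) × Y) :=
      {p | p.1 ∈ R ∧ (p.1.1, p.2) ∈ R ∧ e p.2 < e p.1.2} with hS
    have hSmeas : MeasurableSet S := by
      apply MeasurableSet.inter
      · exact measurable_fst hR
      apply MeasurableSet.inter
      · exact (measurable_fst.fst.prodMk measurable_snd) hR
      · exact measurableSet_lt (he.measurable.comp measurable_snd)
          (he.measurable.comp measurable_fst.snd)
    have hSsec : ∀ p : X × Y, {y | (p, y) ∈ S} ⊆ {y | (p.1, y) ∈ R} \ {p.2} := by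
      rintro ⟨x, y⟩ y' ⟨h1, h2, h3⟩
      exact ⟨h2, fun h => absurd (congrArg e h) (ne_of_lt h3)⟩
    have hSfin : ∀ p : X × Y, {y | (p, y) ∈ S}.Finite :=
      fun p => ((hfin p.1).diff).subset (hSsec p)
    have hScard : ∀ p : X × Y, {y | (p, y) ∈ S}.ncard ≤ n := by
      rintro ⟨x, y⟩
      by_cases hxy : (x, y) ∈ R
      · calc {y' | ((x, y), y') ∈ S}.ncard ≤ ({y' | (x, y') ∈ R} \ {y}).ncard :=
              Set.ncard_le_ncard (hSsec (x, y)) ((hfin x).diff)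
          _ = {y' | (x, y') ∈ R}.ncard - 1 := Set.ncard_diff_singleton_of_mem (s := {y' | (x, y') ∈ R}) hxy
          _ ≤ n := by have := hcard x; omega
      · have : {y' | ((x, y), y') ∈ S} = ∅ := by
          ext y'; simp only [mem_empty_iff_false, iff_false]
          rintro ⟨h1, -, -⟩; exact hxy h1
        simp [this]
    have hR' : MeasurableSet (Prod.fst '' S) := IH S hSmeas hSfin hScard
    set M : Set (X × Y) := R \ Prod.fst '' S with hM
    have hMmeas : MeasurableSet M := hR.diff hR'
    have hinj : InjOn Prod.fst M := by
      rintro ⟨x, y₁⟩ ⟨hy₁, hy₁'⟩ ⟨x', y₂⟩ ⟨hy₂, hy₂'⟩ h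
      simp only at h
      subst h
      by_contra hne
      have hne' : y₁ ≠ y₂ := fun h => hne (by rw [h])
      rcases lt_or_gt_of_ne (he.injective.ne hne') with h | h
      · exact hy₂' ⟨((x, y₂), y₁), ⟨hy₂, hy₁, h⟩, rfl⟩
      · exact hy₁' ⟨((x, y₁), y₂), ⟨hy₁, hy₂, h⟩, rfl⟩
    have himg : Prod.fst '' M = Prod.fst '' R := by
      apply Subset.antisymm (image_mono diff_subset)
      rintro x ⟨⟨x', y⟩, hxy, rfl⟩
      simp only at hxy ⊢
      -- take the element of the section with minimal e-value
      have hne : ({y | (x', y) ∈ R}).Nonempty := ⟨y, hxy⟩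
      obtain ⟨y₀, hy₀, hy₀min⟩ :=
        Set.exists_min_image _ e (hfin x') hne
      refine ⟨(x', y₀), ⟨hy₀, ?_⟩, rfl⟩
      rintro ⟨⟨⟨a, b⟩, y'⟩, ⟨h1, h2, h3⟩, h4⟩
      simp only [Prod.mk.injEq] at h4
      obtain ⟨rfl, rfl⟩ := h4
      exact absurd (hy₀min y' h2) (not_le.mpr h3)
    rw [← himg]
    exact hMmeas.image_of_measurable_injOn measurable_fst hinj

section Walks

variable {E : Set (V × V)} {d : ℕ}

lemma walkLen_succ_iff {n : ℕ} {x y : V} :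
    WalkLen E (n + 1) x y ↔ ∃ z, (x, z) ∈ E ∧ WalkLen E n z y := Iff.rfl

lemma walkLen_append {n : ℕ} {x y : V} :
    WalkLen E (n + 1) x y ↔ ∃ z, WalkLen E n x z ∧ (z, y) ∈ E := by
  induction n generalizing x y with
  | zero =>
    constructor
    · rintro ⟨z, hz, hw⟩; cases hw; exact ⟨x, rfl, hz⟩
    · rintro ⟨z, hw, hz⟩; cases hw; exact ⟨y, hz, rfl⟩
  | succ n IH =>
    constructor
    · rintro ⟨z, hz, hw⟩
      obtain ⟨w, hw1, hw2⟩ := IH.1 hw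
      exact ⟨w, ⟨z, hz, hw1⟩, hw2⟩
    · rintro ⟨z, ⟨w, hw1, hw2⟩, hz⟩
      exact ⟨w, hw1, IH.2 ⟨z, hw2, hz⟩⟩

lemma walkLen_symm (hsymm : IsSymm E) {n : ℕ} {x y : V} (h : WalkLen E n x y) :
    WalkLen E n y x := by
  induction n generalizing x y with
  | zero => exact h.symm
  | succ n IH =>
    obtain ⟨z, hz, hw⟩ := h
    exact walkLen_append.2 ⟨z, IH hw, hsymm _ _ hz⟩

lemma walkLen_sections (hd : MaxDegLE E d) (n : ℕ) (x : V) :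
    {y | WalkLen E n x y}.Finite ∧ {y | WalkLen E n x y}.ncard ≤ (d + 1) ^ n := by
  induction n generalizing x with
  | zero =>
    have : {y | WalkLen E 0 x y} = {x} := by
      ext y; simp [WalkLen, eq_comm]
    rw [this]; simp
  | succ n IH =>
    have hU : {y | WalkLen E (n + 1) x y} = ⋃ z ∈ nbrs E x, {y | WalkLen E n z y} := by
      ext y
      simp only [mem_iUnion, mem_setOf_eq, walkLen_succ_iff, nbrs]
      exact ⟨fun ⟨z, h1, h2⟩ => ⟨z, h1, h2⟩, fun ⟨z, h1, h2⟩ => ⟨z, h1, h2⟩⟩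
    have hfin : {y | WalkLen E (n + 1) x y}.Finite := by
      rw [hU]
      exact Set.Finite.biUnion (hd x).1 fun z _ => (IH z).1
    refine ⟨hfin, ?_⟩
    classical
    have hN : (nbrs E x).Finite := (hd x).1
    have hU' : {y | WalkLen E (n + 1) x y} =
        ↑(hN.toFinset.biUnion fun z => (IH z).1.toFinset) := by
      rw [hU]
      ext y
      simp
    rw [hU', Set.ncard_coe_finset]
    calc (hN.toFinset.biUnion fun z => (IH z).1.toFinset).card
        ≤ ∑ z ∈ hN.toFinset, ((IH z).1.toFinset).card := Finset.card_biUnion_le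
      _ ≤ hN.toFinset.card * (d + 1) ^ n := by
          apply Finset.sum_le_card_nsmul
          intro z _
          have := (IH z).2
          rwa [Set.ncard_eq_toFinset_card _ (IH z).1] at this
      _ ≤ d * (d + 1) ^ n := by
          have : hN.toFinset.card ≤ d := by
            have := (hd x).2
            rwa [Set.ncard_eq_toFinset_card _ hN] at this
          exact Nat.mul_le_mul_right _ this
      _ ≤ (d + 1) ^ (n + 1) := by
          rw [pow_succ, mul_comm]
          exact Nat.mul_le_mul_left _ (by omega)

variable [MeasurableSpace V] [StandardBorelSpace V]

lemma walkLen_measurable (hmeas : MeasurableSet E) (hd : MaxDegLE E d) (n : ℕ) :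
    MeasurableSet {p : V × V | WalkLen E n p.1 p.2} := by
  induction n with
  | zero =>
    obtain ⟨e, he⟩ := MeasureTheory.exists_measurableEmbedding_real V
    have : {p : V × V | WalkLen E 0 p.1 p.2} = {p : V × V | e p.1 = e p.2} := by
      ext p
      exact ⟨fun h => congrArg e h, fun h => he.injective h⟩
    rw [this]
    have : {p : V × V | e p.1 = e p.2} =
        (fun p : V × V => (e p.1, e p.2)) ⁻¹' Set.diagonal ℝ := rfl
    rw [this]
    exact ((he.measurable.comp measurable_fst).prodMk (he.measurable.comp measurable_snd))
      isClosed_diagonal.measurableSet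
  | succ n IH =>
    have himg : {p : V × V | WalkLen E (n + 1) p.1 p.2} =
        Prod.fst '' {q : (V × V) × V | (q.1.1, q.2) ∈ E ∧ WalkLen E n q.2 q.1.2} := by
      ext ⟨x, y⟩
      simp only [mem_setOf_eq, mem_image]
      constructor
      · rintro ⟨z, hz, hw⟩; exact ⟨((x, y), z), ⟨hz, hw⟩, rfl⟩
      · rintro ⟨⟨⟨a, b⟩, z⟩, ⟨h1, h2⟩, h3⟩
        simp only [Prod.mk.injEq] at h3
        obtain ⟨rfl, rfl⟩ := h3
        exact ⟨z, h1, h2⟩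
    rw [himg]
    apply proj_meas d
    · apply MeasurableSet.inter
      · exact (measurable_fst.fst.prodMk measurable_snd) hmeas
      · exact (measurable_snd.prodMk measurable_fst.snd) IH
    · intro p
      exact (hd p.1).1.subset fun z hz => hz.1
    · intro p
      refine le_trans (Set.ncard_le_ncard (fun z hz => hz.1) (hd p.1).1) (hd p.1).2

end Walks


section Coloring

variable {R : Set (V × V)} {D : ℕ}

/-- A Borel proper `ℕ`-coloring of a bounded-degree Borel graph. -/
lemma exists_nat_coloring [MeasurableSpace V] [StandardBorelSpace V]
    (hmeas : MeasurableSet R) (hirr : Irrefl R) (hD : MaxDegLE R D) :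
    ∃ c : V → ℕ, Measurable c ∧ ∀ x y, (x, y) ∈ R → c x ≠ c y := by
  obtain ⟨e, he⟩ := MeasureTheory.exists_measurableEmbedding_real V
  obtain ⟨u, hu⟩ := exists_surjective_nat (ℚ × ℚ)
  set S : ℕ → Set V := fun n => e ⁻¹' Ioo ((u n).1 : ℝ) ((u n).2 : ℝ) with hSdef
  have hSmeas : ∀ n, MeasurableSet (S n) := fun n => he.measurable measurableSet_Ioo
  set A : ℕ → Set V := fun n => S n \ {x | ∃ y, (x, y) ∈ R ∧ y ∈ S n} with hAdef
  have hAmeas : ∀ n, MeasurableSet (A n) := by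
    intro n
    apply (hSmeas n).diff
    have : {x | ∃ y, (x, y) ∈ R ∧ y ∈ S n} = Prod.fst '' (R ∩ {p : V × V | p.2 ∈ S n}) := by
      ext x
      constructor
      · rintro ⟨y, h1, h2⟩; exact ⟨(x, y), ⟨h1, h2⟩, rfl⟩
      · rintro ⟨⟨a, y⟩, ⟨h1, h2⟩, rfl⟩; exact ⟨y, h1, h2⟩
    rw [this]
    apply proj_meas D
    · exact hmeas.inter (measurable_snd (hSmeas n))
    · exact fun x => (hD x).1.subset fun y hy => hy.1
    · exact fun x => le_trans (Set.ncard_le_ncard (fun y hy => hy.1) (hD x).1) (hD x).2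
  have hAex : ∀ x, ∃ n, x ∈ A n := by
    intro x
    set T : Set ℝ := insert (e x + 1) (e '' nbrs R x) with hTdef
    have hTfin : T.Finite := ((hD x).1.image e).insert _
    have hTne : T.Nonempty := ⟨e x + 1, mem_insert _ _⟩
    have hex : e x ∉ T := by
      rintro (h | ⟨y, hy, hey⟩)
      · exact absurd h (by simp)
      · exact hirr x (by rwa [he.injective hey] at hy)
    have hpos : 0 < Metric.infDist (e x) T :=
      (hTfin.isClosed.notMem_iff_infDist_pos hTne).1 hex
    obtain ⟨q₁, hq₁, hq₁'⟩ := exists_rat_btwn (by linarith : e x - Metric.infDist (e x) T < e x)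
    obtain ⟨q₂, hq₂, hq₂'⟩ := exists_rat_btwn (by linarith : e x < e x + Metric.infDist (e x) T)
    obtain ⟨n, hn⟩ := hu (q₁, q₂)
    have hSn : S n = e ⁻¹' Ioo (q₁ : ℝ) (q₂ : ℝ) := by simp only [hSdef, hn]
    refine ⟨n, ?_, ?_⟩
    · rw [hSn]
      exact ⟨hq₁', hq₂⟩
    · rintro ⟨y, hyR, hyS⟩
      rw [hSn] at hyS
      have hyT : e y ∈ T := mem_insert_of_mem _ ⟨y, hyR, rfl⟩
      have hdist : Metric.infDist (e x) T ≤ dist (e x) (e y) :=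
        Metric.infDist_le_dist_of_mem (x := e x) hyT
      rw [Real.dist_eq] at hdist
      obtain ⟨h3, h4⟩ := hyS
      have habs : |e x - e y| < Metric.infDist (e x) T :=
        abs_lt.2 ⟨by linarith, by linarith⟩
      linarith
  set c : V → ℕ := fun x => sInf {n | x ∈ A n} with hcdef
  have hcmem : ∀ x, x ∈ A (c x) := fun x => Nat.sInf_mem (hAex x)
  have hcpre : ∀ n, c ⁻¹' {n} = A n ∩ ⋂ m ∈ Finset.range n, (A m)ᶜ := by
    intro n
    ext x
    simp only [mem_preimage, mem_singleton_iff, mem_inter_iff, mem_iInter, mem_compl_iff,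
      Finset.mem_range]
    constructor
    · rintro rfl
      refine ⟨hcmem x, fun m hm hmem => ?_⟩
      have h2 : c x ≤ m := Nat.sInf_le hmem
      omega
    · rintro ⟨h1, h2⟩
      have hle : c x ≤ n := Nat.sInf_le h1
      rcases lt_or_eq_of_le hle with h | h
      · exact absurd (hcmem x) (h2 _ h)
      · exact h
  refine ⟨c, ?_, ?_⟩
  · apply measurable_to_countable'
    intro n
    rw [hcpre n]
    exact (hAmeas n).inter (MeasurableSet.biInter (Finset.range n).countable_toSet
      fun m _ => (hAmeas m).compl)
  · intro x y hxy hcxy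
    have hx := hcmem x
    have hy := hcmem y
    rw [hcxy] at hx
    exact hx.2 ⟨y, hxy, hy.1⟩

end Coloring


section Greedy

/-- Greedy recoloring: the color of `x` at stage `n` is the least color not used by any
neighbour of `x` whose `c`-value is smaller than `n`. -/
noncomputable def greedy (R : Set (V × V)) (c : V → ℕ) (n : ℕ) (x : V) : ℕ :=
  sInf {i | ∀ y : V, (x, y) ∈ R → ∀ _ : c y < n, greedy R c (c y) y ≠ i}
termination_by n
decreasing_by omega

variable {R : Set (V × V)} {c : V → ℕ} {D : ℕ}

lemma greedy_good (hD : MaxDegLE R D) (n : ℕ) (x : V) :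
    {i | ∀ y : V, (x, y) ∈ R → ∀ _ : c y < n, greedy R c (c y) y ≠ i}.Nonempty ∧
    ∃ i₀ ∈ {i | ∀ y : V, (x, y) ∈ R → ∀ _ : c y < n, greedy R c (c y) y ≠ i}, i₀ ≤ D := by
  set Fb : Set ℕ := (fun y => greedy R c (c y) y) '' nbrs R x with hFb
  have hFbfin : Fb.Finite := (hD x).1.image _
  have hFbcard : Fb.ncard ≤ D := le_trans (Set.ncard_image_le (hD x).1) (hD x).2
  have : ∃ i₀ ≤ D, i₀ ∉ Fb := by
    by_contra h
    push_neg at h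
    have hsub : ((Finset.range (D + 1) : Finset ℕ) : Set ℕ) ⊆ Fb := by
      intro i hi
      simp only [Finset.coe_range, mem_Iio] at hi
      exact h i (by omega)
    have := Set.ncard_le_ncard hsub hFbfin
    rw [Set.ncard_coe_finset, Finset.card_range] at this
    omega
  obtain ⟨i₀, hi₀D, hi₀⟩ := this
  have hi₀G : i₀ ∈ {i | ∀ y : V, (x, y) ∈ R → ∀ _ : c y < n, greedy R c (c y) y ≠ i} := by
    intro y hy _ hcon
    exact hi₀ ⟨y, hy, hcon⟩
  exact ⟨⟨i₀, hi₀G⟩, i₀, hi₀G, hi₀D⟩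

lemma greedy_le (hD : MaxDegLE R D) (n : ℕ) (x : V) : greedy R c n x ≤ D := by
  obtain ⟨-, i₀, hi₀, hi₀D⟩ := greedy_good (c := c) hD n x
  rw [greedy]
  exact le_trans (Nat.sInf_le hi₀) hi₀D

lemma greedy_avoids (hD : MaxDegLE R D) (n : ℕ) (x : V) :
    ∀ y : V, (x, y) ∈ R → c y < n → greedy R c (c y) y ≠ greedy R c n x := by
  obtain ⟨hne, -⟩ := greedy_good (c := c) hD n x
  have := Nat.sInf_mem hne
  rw [greedy]
  exact fun y hy hcy => this y hy hcy

lemma greedy_measurable [MeasurableSpace V] [StandardBorelSpace V]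
    (hmeas : MeasurableSet R) (hD : MaxDegLE R D) (hc : Measurable c) (n : ℕ) :
    ∀ i, MeasurableSet {x | greedy R c n x = i} := by
  induction n using Nat.strong_induction_on with
  | _ n IH =>
    have hB : ∀ j, MeasurableSet {x | ∃ y, (x, y) ∈ R ∧ c y < n ∧ greedy R c (c y) y = j} := by
      intro j
      have hset : {y | c y < n ∧ greedy R c (c y) y = j} =
          ⋃ m ∈ Finset.range n, (c ⁻¹' {m} ∩ {y | greedy R c m y = j}) := by
        ext y
        simp only [mem_setOf_eq, mem_iUnion, Finset.mem_range, mem_inter_iff, mem_preimage,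
          mem_singleton_iff]
        constructor
        · rintro ⟨h1, h2⟩; exact ⟨c y, h1, rfl, h2⟩
        · rintro ⟨m, hm, rfl, h2⟩; exact ⟨hm, h2⟩
      have hsetm : MeasurableSet {y | c y < n ∧ greedy R c (c y) y = j} := by
        rw [hset]
        exact MeasurableSet.biUnion (Finset.range n).countable_toSet
          fun m hm => (hc (measurableSet_singleton m)).inter (IH m (Finset.mem_range.1 hm) j)
      have himg : {x | ∃ y, (x, y) ∈ R ∧ c y < n ∧ greedy R c (c y) y = j} =
          Prod.fst '' (R ∩ {p : V × V | c p.2 < n ∧ greedy R c (c p.2) p.2 = j}) := by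
        ext x
        constructor
        · rintro ⟨y, h1, h2, h3⟩; exact ⟨(x, y), ⟨h1, h2, h3⟩, rfl⟩
        · rintro ⟨⟨a, y⟩, ⟨h1, h2, h3⟩, rfl⟩; exact ⟨y, h1, h2, h3⟩
      rw [himg]
      apply proj_meas D
      · exact hmeas.inter (measurable_snd hsetm)
      · exact fun x => (hD x).1.subset fun y hy => hy.1
      · exact fun x => le_trans (Set.ncard_le_ncard (fun y hy => hy.1) (hD x).1) (hD x).2
    intro i
    have hchar : {x | greedy R c n x = i} =
        {x | ∃ y, (x, y) ∈ R ∧ c y < n ∧ greedy R c (c y) y = i}ᶜ ∩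
          ⋂ j ∈ Finset.range i, {x | ∃ y, (x, y) ∈ R ∧ c y < n ∧ greedy R c (c y) y = j} := by
      ext x
      simp only [mem_setOf_eq, mem_inter_iff, mem_compl_iff, mem_iInter, Finset.mem_range]
      have hne := (greedy_good (c := c) hD n x).1
      constructor
      · rintro rfl
        refine ⟨?_, ?_⟩
        · rintro ⟨y, h1, h2, h3⟩
          exact greedy_avoids hD n x y h1 h2 h3
        · intro j hj
          by_contra hcon
          push_neg at hcon
          have hjG : j ∈ {i | ∀ y : V, (x, y) ∈ R → ∀ _ : c y < n,
              greedy R c (c y) y ≠ i} := by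
            intro y hy hcy
            exact hcon y hy hcy
          have : greedy R c n x ≤ j := by
            rw [greedy]
            exact Nat.sInf_le hjG
          omega
      · rintro ⟨h1, h2⟩
        have hiG : i ∈ {i | ∀ y : V, (x, y) ∈ R → ∀ _ : c y < n,
            greedy R c (c y) y ≠ i} := by
          intro y hy hcy hcon
          exact h1 ⟨y, hy, hcy, hcon⟩
        have hle : greedy R c n x ≤ i := by
          rw [greedy]
          exact Nat.sInf_le hiG
        rcases lt_or_eq_of_le hle with h | h
        · obtain ⟨y, hy, hcy, hcon⟩ := h2 _ h
          exact absurd (greedy_avoids hD n x y hy hcy hcon) not_false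
        · exact h
    rw [hchar]
    exact (hB i).compl.inter
      (MeasurableSet.biInter (Finset.range i).countable_toSet fun j _ => hB j)

/-- Every bounded-degree Borel graph has a Borel proper coloring with `D + 1` colors. -/
lemma exists_fin_coloring [MeasurableSpace V] [StandardBorelSpace V]
    (hmeas : MeasurableSet R) (hsymm : IsSymm R) (hirr : Irrefl R) (hD : MaxDegLE R D) :
    ∃ ℓ : V → Fin (D + 1), Measurable ℓ ∧ ∀ x y, (x, y) ∈ R → ℓ x ≠ ℓ y := by
  obtain ⟨c, hc, hcprop⟩ := exists_nat_coloring hmeas hirr hD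
  refine ⟨fun x => ⟨greedy R c (c x) x, Nat.lt_succ_of_le (greedy_le hD _ x)⟩, ?_, ?_⟩
  · apply measurable_to_countable'
    intro i
    have : (fun x => (⟨greedy R c (c x) x, Nat.lt_succ_of_le (greedy_le hD _ x)⟩ :
        Fin (D + 1))) ⁻¹' {i} = ⋃ n, (c ⁻¹' {n} ∩ {x | greedy R c n x = i.val}) := by
      ext x
      simp only [mem_preimage, mem_singleton_iff, mem_iUnion, mem_inter_iff, mem_setOf_eq,
        Fin.ext_iff]
      constructor
      · intro h; exact ⟨c x, rfl, h⟩
      · rintro ⟨n, rfl, h⟩; exact h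
    rw [this]
    exact MeasurableSet.iUnion fun n =>
      (hc (measurableSet_singleton n)).inter (greedy_measurable hmeas hD hc n i.val)
  · intro x y hxy
    have hcne : c x ≠ c y := hcprop x y hxy
    simp only [ne_eq, Fin.mk.injEq]
    rcases lt_or_gt_of_ne hcne with h | h
    · intro hcon
      exact greedy_avoids hD (c y) y x (hsymm _ _ hxy) h hcon
    · intro hcon
      exact greedy_avoids hD (c x) x y hxy h hcon.symm

end Greedy


/-- Every Borel graph of finite maximum degree admits, for every `k`, a
Borel labeling `ℓ : V → Fin m` all of whose fibers are `k`-sparse. -/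
theorem exists_sparse_labeling {V : Type u} [MeasurableSpace V] [StandardBorelSpace V]
    (E : Set (V × V)) (hmeas : MeasurableSet E) (hsymm : IsSymm E) (hirr : Irrefl E)
    (hdeg : ∃ d : ℕ, MaxDegLE E d) (k : ℕ) :
    ∃ (m : ℕ) (ℓ : V → Fin m), Measurable ℓ ∧ ∀ i : Fin m, RSparse E k (ℓ ⁻¹' {i}) := by
  classical
  obtain ⟨d, hd⟩ := hdeg
  set R : Set (V × V) := {p | p.1 ≠ p.2 ∧ DistLE E k p.1 p.2} with hRdef
  set D : ℕ := (k + 1) * (d + 1) ^ k with hDdef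
  -- Symmetry, irreflexivity
  have hRsymm : IsSymm R := by
    rintro x y ⟨h1, n, hn, hw⟩
    exact ⟨h1.symm, n, hn, walkLen_symm hsymm hw⟩
  have hRirr : Irrefl R := fun x h => h.1 rfl
  -- Degree bound
  have hRdeg : MaxDegLE R D := by
    intro x
    have hsub : nbrs R x ⊆ ⋃ n ∈ Finset.range (k + 1), {y | WalkLen E n x y} := by
      rintro y ⟨-, n, hn, hw⟩
      simp only [mem_iUnion, Finset.mem_range, mem_setOf_eq]
      exact ⟨n, by omega, hw⟩
    have hfinU : ∀ n, {y | WalkLen E n x y}.Finite := fun n => (walkLen_sections hd n x).1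
    set U : Finset V :=
      (Finset.range (k + 1)).biUnion (fun n => (hfinU n).toFinset) with hUdef
    have hsub' : nbrs R x ⊆ ↑U := by
      intro y hy
      have := hsub hy
      simp only [mem_iUnion, Finset.mem_range] at this
      obtain ⟨n, hn, hw⟩ := this
      simp only [hUdef, Finset.coe_biUnion, Finset.coe_range, mem_iUnion, mem_Iio,
        Set.Finite.coe_toFinset]
      exact ⟨n, hn, hw⟩
    constructor
    · exact U.finite_toSet.subset hsub'
    · calc (nbrs R x).ncard ≤ (↑U : Set V).ncard :=
            Set.ncard_le_ncard hsub' U.finite_toSet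
        _ = U.card := Set.ncard_coe_finset U
        _ ≤ ∑ n ∈ Finset.range (k + 1), ((hfinU n).toFinset).card := Finset.card_biUnion_le
        _ ≤ (k + 1) * (d + 1) ^ k := by
            have hcard : ∀ n ∈ Finset.range (k + 1), ((hfinU n).toFinset).card ≤
                (d + 1) ^ k := by
              intro n hn
              have h1 := (walkLen_sections hd n x).2
              rw [Set.ncard_eq_toFinset_card _ (hfinU n)] at h1
              exact le_trans h1 (Nat.pow_le_pow_right (by omega)
                (by simpa using Nat.lt_succ_iff.1 (Finset.mem_range.1 hn)))
            calc ∑ n ∈ Finset.range (k + 1), ((hfinU n).toFinset).card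
                ≤ (Finset.range (k + 1)).card * (d + 1) ^ k :=
                  Finset.sum_le_card_nsmul _ _ _ hcard
              _ = (k + 1) * (d + 1) ^ k := by rw [Finset.card_range]
  -- Measurability
  have hRmeas : MeasurableSet R := by
    have hR2 : R = (⋃ n ∈ Finset.range (k + 1), {p : V × V | WalkLen E n p.1 p.2}) ∩
        {p : V × V | WalkLen E 0 p.1 p.2}ᶜ := by
      ext ⟨x, y⟩
      simp only [hRdef, mem_setOf_eq, mem_inter_iff, mem_iUnion, Finset.mem_range,
        mem_compl_iff]
      constructor
      · rintro ⟨h1, n, hn, hw⟩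
        exact ⟨⟨n, by omega, hw⟩, h1⟩
      · rintro ⟨⟨n, hn, hw⟩, h1⟩
        exact ⟨h1, n, by omega, hw⟩
    rw [hR2]
    exact (MeasurableSet.biUnion (Finset.range (k + 1)).countable_toSet
        fun n _ => walkLen_measurable hmeas hd n).inter
      (walkLen_measurable hmeas hd 0).compl
  obtain ⟨ℓ, hℓmeas, hℓprop⟩ := exists_fin_coloring hRmeas hRsymm hRirr hRdeg
  refine ⟨D + 1, ℓ, hℓmeas, ?_⟩
  intro i x hx y hy hne hdist
  exact hℓprop x y ⟨hne, hdist⟩ (by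
    simp only [mem_preimage, mem_singleton_iff] at hx hy
    rw [hx, hy])


end CLP
end

section
/- Let G be a graph with a matching M. Let p be an even alternating path from a vertex x to a vertex y, and let q be an odd weakly-alternating path from y to a vertex z. Then there is an odd alternating path from x to either y or z whose length is at most |p| + |q|. -/
open MeasureTheory Set
open scoped ENNReal

namespace CLP

universe u

variable {V : Type u}

/-- The consecutive pairs of the list `l` are edges of `E`, which alternately avoid and
belong to the matching `M`, starting with an edge not in `M`. -/
def AltEdges (E M : Set (V × V)) (l : List V) : Prop :=
  ∀ (i : ℕ) (h : i + 1 < l.length),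
    (l.get ⟨i, by omega⟩, l.get ⟨i + 1, h⟩) ∈ E ∧
    (Even i ↔ (l.get ⟨i, by omega⟩, l.get ⟨i + 1, h⟩) ∉ M)

/-- A weakly-alternating path of length `n` from `x` to `y`: a self-avoiding walk whose
edges alternately lie outside `M` and in `M`, starting with an edge not in `M`. -/
def WeakAltPath (E M : Set (V × V)) (x y : V) (n : ℕ) : Prop :=
  ∃ l : List V, l.length = n + 1 ∧ l.Nodup ∧ l.head? = some x ∧ l.getLast? = some y ∧
    AltEdges E M l

lemma weakAltPath_iff_fn (E M : Set (V × V)) (x y : V) (n : ℕ) :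
    WeakAltPath E M x y n ↔ ∃ f : ℕ → V, f 0 = x ∧ f n = y ∧
      (∀ i j : ℕ, i ≤ n → j ≤ n → f i = f j → i = j) ∧
      (∀ i : ℕ, i < n → (f i, f (i+1)) ∈ E ∧ (Even i ↔ (f i, f (i+1)) ∉ M)) := by
  constructor
  · rintro ⟨l, hlen, hnd, hhd, hlast, halt⟩
    have hne : l ≠ [] := by intro h; simp [h] at hlen
    refine ⟨fun i => l.getD i x, ?_, ?_, ?_, ?_⟩
    · have h0 : (0 : ℕ) < l.length := by omega
      show l.getD 0 x = x
      rw [List.getD_eq_getElem l x h0]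
      rw [List.head?_eq_head hne, List.head_eq_getElem] at hhd
      exact Option.some_inj.mp hhd
    · have h0 : n < l.length := by omega
      show l.getD n x = y
      rw [List.getD_eq_getElem l x h0]
      rw [List.getLast?_eq_getLast hne, List.getLast_eq_getElem] at hlast
      simp only [hlen, Nat.add_sub_cancel] at hlast
      exact Option.some_inj.mp hlast
    · intro i j hi hj hij
      have hi' : i < l.length := by omega
      have hj' : j < l.length := by omega
      simp only at hij
      rw [List.getD_eq_getElem l x hi', List.getD_eq_getElem l x hj'] at hij
      have := List.nodup_iff_injective_get.mp hnd
        (a₁ := ⟨i, hi'⟩) (a₂ := ⟨j, hj'⟩) (by simpa using hij)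
      simpa using congrArg Fin.val this
    · intro i hi
      have h1 : i + 1 < l.length := by omega
      have h0 : i < l.length := by omega
      have := halt i h1
      show ((l.getD i x, l.getD (i+1) x) ∈ E ∧ (Even i ↔ (l.getD i x, l.getD (i+1) x) ∉ M))
      rw [List.getD_eq_getElem l x h0, List.getD_eq_getElem l x h1]
      simpa using this
  · rintro ⟨f, h0, hn, hinj, he⟩
    refine ⟨(List.range (n+1)).map f, by simp, ?_, ?_, ?_, ?_⟩
    · refine List.Nodup.map_on ?_ List.nodup_range
      intro a ha b hb hab
      exact hinj a b (by simpa using Nat.lt_succ_iff.mp (List.mem_range.mp ha))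
        (by simpa using Nat.lt_succ_iff.mp (List.mem_range.mp hb)) hab
    · have hne : (List.range (n+1)).map f ≠ [] := by simp
      rw [List.head?_eq_head hne, List.head_eq_getElem]
      simp [h0]
    · have hne : (List.range (n+1)).map f ≠ [] := by simp
      rw [List.getLast?_eq_getLast hne, List.getLast_eq_getElem]
      simp [hn]
    · intro i h
      simp only [List.length_map, List.length_range] at h
      have hi : i < n := by omega
      have := he i hi
      simpa using this

/-- An alternating path: a weakly-alternating path whose first vertex is not covered
by the matching. -/
def AltPath (E M : Set (V × V)) (x y : V) (n : ℕ) : Prop :=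
  WeakAltPath E M x y n ∧ x ∉ coveredVerts M

/-- If `p` is an even alternating path from `x` to `y` and `q` is an odd
weakly-alternating path from `y` to `z`, then there is an odd alternating path from `x` to
`y` or to `z` of length at most `|p| + |q|`. -/
theorem odd_altPath_of_concat {V : Type u} (E M : Set (V × V))
    (hsymmE : IsSymm E) (hirr : Irrefl E) (hME : M ⊆ E) (hM : IsMatching M)
    (x y z : V) (np nq : ℕ) (hnp : Even np) (hnq : Odd nq)
    (hp : AltPath E M x y np) (hq : WeakAltPath E M y z nq) :
    ∃ m : ℕ, Odd m ∧ m ≤ np + nq ∧ (AltPath E M x y m ∨ AltPath E M x z m) := by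
  classical
  obtain ⟨hpw, hx⟩ := hp
  obtain ⟨fp, hp0, hpn, hpinj, hpe⟩ := (weakAltPath_iff_fn E M x y np).mp hpw
  obtain ⟨fq, hq0, hqn, hqinj, hqe⟩ := (weakAltPath_iff_fn E M y z nq).mp hq
  have hMsymm : ∀ a b : V, (a, b) ∈ M ↔ (b, a) ∈ M := fun a b => ⟨hM.1 a b, hM.1 b a⟩
  have hS : ∃ i : ℕ, i ≤ np ∧ ∃ j : ℕ, j ≤ nq ∧ fp i = fq j :=
    ⟨np, le_rfl, 0, Nat.zero_le _, by rw [hpn, hq0]⟩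
  obtain ⟨i, hile, ⟨j, hjle, hij⟩, hdisj⟩ :
      ∃ i : ℕ, i ≤ np ∧ (∃ j : ℕ, j ≤ nq ∧ fp i = fq j) ∧
        ∀ i' : ℕ, i' < i → ∀ j' : ℕ, j' ≤ nq → fp i' ≠ fq j' := by
    obtain ⟨hile, j, hjle, hij⟩ := Nat.find_spec hS
    exact ⟨Nat.find hS, hile, ⟨j, hjle, hij⟩, fun i' hi' j' hj' h =>
      Nat.find_min hS hi' ⟨le_trans hi'.le hile, j', hj', h⟩⟩
  rcases Nat.even_or_odd (i + j) with hpar | hpar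
  · -- even case: splice p[0..i] with q[j..nq], path from x to z
    obtain ⟨a, ha⟩ := hpar
    obtain ⟨b, hb⟩ := hnq
    refine ⟨i + (nq - j), ⟨(i + (nq - j) - 1) / 2, by omega⟩, by omega, Or.inr ⟨?_, hx⟩⟩
    rw [weakAltPath_iff_fn]
    refine ⟨fun k => if k < i then fp k else fq (j + (k - i)), ?_, ?_, ?_, ?_⟩
    · rcases Nat.eq_zero_or_pos i with h0 | h0
      · subst h0
        simp only [Nat.lt_irrefl, if_false, Nat.sub_self, Nat.add_zero]
        rw [← hij]; exact hp0
      · simp [h0, hp0]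
    · have h1 : ¬ (i + (nq - j) < i) := by omega
      simp only [h1, if_false]
      have h2 : j + (i + (nq - j) - i) = nq := by omega
      rw [h2]; exact hqn
    · intro k1 k2 hk1 hk2 h
      by_cases c1 : k1 < i <;> by_cases c2 : k2 < i <;>
        simp only [c1, c2, if_true, if_false] at h
      · exact hpinj k1 k2 (by omega) (by omega) h
      · exact absurd h (hdisj k1 c1 _ (by omega))
      · exact absurd h.symm (hdisj k2 c2 _ (by omega))
      · have := hqinj _ _ (by omega) (by omega) h
        omega
    · intro k hk
      by_cases c1 : k < i
      · have hkp : k < np := by omega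
        have hedge := hpe k hkp
        by_cases c2 : k + 1 < i
        · simpa only [c1, c2, if_true] using hedge
        · have hki : k + 1 = i := by omega
          have h3 : (if k + 1 < i then fp (k+1) else fq (j + (k + 1 - i))) = fp (k+1) := by
            simp only [c2, if_false]
            rw [hki, Nat.sub_self, Nat.add_zero, ← hij]
          simp only [c1, if_true, h3]
          exact hedge
      · have hc1 : ¬ (k + 1 < i) := by omega
        simp only [c1, hc1, if_false]
        have htlt : j + (k - i) < nq := by omega
        have hedge := hqe _ htlt
        have hstep : j + (k + 1 - i) = (j + (k - i)) + 1 := by omega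
        rw [hstep]
        refine ⟨hedge.1, ?_⟩
        have hpar2 : Even k ↔ Even (j + (k - i)) := by
          rw [Nat.even_iff, Nat.even_iff]; omega
        rw [hpar2]
        exact hedge.2
  · -- odd case: splice p[0..i] with reverse of q[0..j], path from x to y
    obtain ⟨a, ha⟩ := hpar
    refine ⟨i + j, ⟨a, by omega⟩, by omega, Or.inl ⟨?_, hx⟩⟩
    rw [weakAltPath_iff_fn]
    refine ⟨fun k => if k < i then fp k else fq (i + j - k), ?_, ?_, ?_, ?_⟩
    · rcases Nat.eq_zero_or_pos i with h0 | h0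
      · subst h0
        simp only [Nat.lt_irrefl, if_false, Nat.zero_add, Nat.sub_zero]
        rw [← hij]; exact hp0
      · simp [h0, hp0]
    · have h1 : ¬ (i + j < i) := by omega
      simp only [h1, if_false, Nat.sub_self]
      exact hq0
    · intro k1 k2 hk1 hk2 h
      by_cases c1 : k1 < i <;> by_cases c2 : k2 < i <;>
        simp only [c1, c2, if_true, if_false] at h
      · exact hpinj k1 k2 (by omega) (by omega) h
      · exact absurd h (hdisj k1 c1 _ (by omega))
      · exact absurd h.symm (hdisj k2 c2 _ (by omega))
      · have := hqinj _ _ (by omega) (by omega) h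
        omega
    · intro k hk
      by_cases c1 : k < i
      · have hkp : k < np := by omega
        have hedge := hpe k hkp
        by_cases c2 : k + 1 < i
        · simpa only [c1, c2, if_true] using hedge
        · have hki : k + 1 = i := by omega
          have h3 : (if k + 1 < i then fp (k+1) else fq (i + j - (k + 1))) = fp (k+1) := by
            simp only [c2, if_false]
            rw [hki, show i + j - i = j by omega, ← hij]
          simp only [c1, if_true, h3]
          exact hedge
      · have hc1 : ¬ (k + 1 < i) := by omega
        simp only [c1, hc1, if_false]
        have htlt : i + j - (k + 1) < nq := by omega
        have hedge := hqe _ htlt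
        have hstep : i + j - k = (i + j - (k + 1)) + 1 := by omega
        rw [hstep]
        refine ⟨hsymmE _ _ hedge.1, ?_⟩
        have hpar2 : Even k ↔ Even (i + j - (k + 1)) := by
          rw [Nat.even_iff, Nat.even_iff]; omega
        rw [hpar2, hMsymm]
        exact hedge.2

end CLP
end

section
/- Let d ≥ 2 and let G be a finite graph in which every vertex has degree at most d, except at most one vertex of degree d + 1. Let Z be the set of vertices of degree at least d. Suppose that every set A ⊆ Z with |A| ≥ 2 that spans a connected subgraph has at least d edges joining A to V ∖ A. Then G has a matching covering every vertex of Z. -/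
open MeasureTheory Set
open scoped ENNReal

namespace CLP

universe u

variable {V : Type u}

/-! ### Auxiliary machinery for Statement 11 -/

section Tutte

variable {α : Type u}

lemma walkLen_mono {E F : Set (α × α)} (hEF : E ⊆ F) :
    ∀ {n : ℕ} {x y : α}, WalkLen E n x y → WalkLen F n x y := by
  intro n
  induction n with
  | zero => intro x y h; exact h
  | succ n ih => rintro x y ⟨z, hz, hw⟩; exact ⟨z, hEF hz, ih hw⟩

lemma walkLen_trans {E : Set (α × α)} :
    ∀ {m n : ℕ} {x y z : α}, WalkLen E m x y → WalkLen E n y z → WalkLen E (m + n) x z := by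
  intro m
  induction m with
  | zero => intro n x y z h hw; cases h; simpa using hw
  | succ m ih =>
      rintro n x y z ⟨w, hw, hwalk⟩ h2
      rw [Nat.succ_add]
      exact ⟨w, hw, ih hwalk h2⟩

lemma walkLen_snoc {E : Set (α × α)} :
    ∀ {n : ℕ} {x y z : α}, WalkLen E n x y → (y, z) ∈ E → WalkLen E (n + 1) x z := by
  intro n
  induction n with
  | zero => intro x y z h he; cases h; exact ⟨z, he, rfl⟩
  | succ n ih => rintro x y z ⟨w, hw, hwalk⟩ he; exact ⟨w, hw, ih hwalk he⟩

lemma walkLen_symm_s11 {E : Set (α × α)} (hE : IsSymm E) :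
    ∀ {n : ℕ} {x y : α}, WalkLen E n x y → WalkLen E n y x := by
  intro n
  induction n with
  | zero => intro x y h; exact h.symm
  | succ n ih =>
      rintro x y ⟨z, hz, hwalk⟩
      exact walkLen_snoc (ih hwalk) (hE _ _ hz)

lemma reach_refl {E : Set (α × α)} (x : α) : Reach E x x := ⟨0, rfl⟩

lemma reach_trans {E : Set (α × α)} {x y z : α} (h1 : Reach E x y) (h2 : Reach E y z) :
    Reach E x z := by
  obtain ⟨m, hm⟩ := h1; obtain ⟨n, hn⟩ := h2; exact ⟨m + n, walkLen_trans hm hn⟩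

lemma reach_symm {E : Set (α × α)} (hE : IsSymm E) {x y : α} (h : Reach E x y) :
    Reach E y x := by
  obtain ⟨n, hn⟩ := h; exact ⟨n, walkLen_symm_s11 hE hn⟩

lemma reach_mono {E F : Set (α × α)} (hEF : E ⊆ F) {x y : α} (h : Reach E x y) :
    Reach F x y := by
  obtain ⟨n, hn⟩ := h; exact ⟨n, walkLen_mono hEF hn⟩

lemma reach_of_edge {E : Set (α × α)} {x y : α} (h : (x, y) ∈ E) : Reach E x y :=
  ⟨1, y, h, rfl⟩

/-- The restricted edge set. -/
def KE (E : Set (α × α)) (A : Set α) : Set (α × α) := E ∩ A ×ˢ A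

lemma KE_symm {E : Set (α × α)} (hE : IsSymm E) (A : Set α) : IsSymm (KE E A) := by
  rintro x y ⟨h1, h2, h3⟩; exact ⟨hE _ _ h1, h3, h2⟩

lemma KE_mono {E : Set (α × α)} {A B : Set α} (h : A ⊆ B) : KE E A ⊆ KE E B := by
  rintro ⟨x, y⟩ ⟨h1, h2, h3⟩; exact ⟨h1, h h2, h h3⟩

/-- The component of `x` inside the vertex set `A`. -/
def compIn (E : Set (α × α)) (A : Set α) (x : α) : Set α := component (KE E A) x

lemma mem_compIn_self {E : Set (α × α)} {A : Set α} (x : α) : x ∈ compIn E A x :=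
  reach_refl x

lemma walkLen_KE_end_mem {E : Set (α × α)} {A : Set α} :
    ∀ {n : ℕ} {x y : α}, WalkLen (KE E A) n x y → x = y ∨ y ∈ A := by
  intro n
  induction n with
  | zero => intro x y h; exact Or.inl h
  | succ n ih =>
      rintro x y ⟨z, hz, hw⟩
      rcases ih hw with rfl | hy
      · exact Or.inr hz.2.2
      · exact Or.inr hy

lemma compIn_subset {E : Set (α × α)} {A : Set α} {x : α} (hx : x ∈ A) :
    compIn E A x ⊆ A := by
  rintro y ⟨n, hn⟩
  rcases walkLen_KE_end_mem hn with rfl | hy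
  · exact hx
  · exact hy

lemma compIn_eq_of_reach {E : Set (α × α)} (hE : IsSymm E) {A : Set α} {x y : α}
    (h : Reach (KE E A) x y) : compIn E A x = compIn E A y := by
  ext z
  constructor
  · intro hz; exact reach_trans (reach_symm (KE_symm hE A) h) hz
  · intro hz; exact reach_trans h hz

lemma compIn_eq_of_mem {E : Set (α × α)} (hE : IsSymm E) {A : Set α} {x y : α}
    (h : y ∈ compIn E A x) : compIn E A y = compIn E A x :=
  (compIn_eq_of_reach hE h).symm

lemma compIn_mono {E : Set (α × α)} {A B : Set α} (h : A ⊆ B) (x : α) :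
    compIn E A x ⊆ compIn E B x := fun _ hy => reach_mono (KE_mono h) hy

/-- A walk inside `A'` starting at `x` stays inside the component of `x` w.r.t. any
larger vertex set `A`. -/
lemma walk_stays_in_comp {E : Set (α × α)} (hE : IsSymm E) {A A' : Set α} (hAA : A' ⊆ A)
    {x : α} :
    ∀ {n : ℕ} {y : α}, WalkLen (KE E A') n x y →
      WalkLen (KE E (compIn E A x ∩ A')) n x y := by
  intro n
  induction n generalizing x with
  | zero => intro y h; exact h
  | succ n ih =>
      rintro y ⟨z, hz, hw⟩
      have hzA : Reach (KE E A) x z := reach_of_edge (KE_mono hAA hz)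
      have hcomp : compIn E A z = compIn E A x :=
        (compIn_eq_of_reach hE hzA).symm
      have hw' := ih (x := z) hw
      rw [hcomp] at hw'
      refine ⟨z, ⟨hz.1, ⟨mem_compIn_self x, hz.2.1⟩, ⟨?_, hz.2.2⟩⟩, hw'⟩
      exact hzA

/-- Localization: the component of `x` in `A' ⊆ A` equals its component inside
`compIn E A x ∩ A'`. -/
lemma compIn_local {E : Set (α × α)} (hE : IsSymm E) {A A' : Set α} (hAA : A' ⊆ A) (x : α) :
    compIn E A' x = compIn E (compIn E A x ∩ A') x := by
  apply Set.Subset.antisymm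
  · rintro y ⟨n, hn⟩; exact ⟨n, walk_stays_in_comp hE hAA hn⟩
  · exact compIn_mono Set.inter_subset_right x

/-- The set of connectivity components of `A`. -/
def compsIn (E : Set (α × α)) (A : Set α) : Set (Set α) :=
  {C | ∃ x ∈ A, C = compIn E A x}

lemma compIn_mem_compsIn {E : Set (α × α)} {A : Set α} {x : α} (hx : x ∈ A) :
    compIn E A x ∈ compsIn E A := ⟨x, hx, rfl⟩

lemma compsIn_nonempty {E : Set (α × α)} {A : Set α} {C : Set α} (hC : C ∈ compsIn E A) :
    C.Nonempty := by
  obtain ⟨x, hx, rfl⟩ := hC; exact ⟨x, mem_compIn_self x⟩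

lemma compsIn_subset {E : Set (α × α)} {A : Set α} {C : Set α} (hC : C ∈ compsIn E A) :
    C ⊆ A := by
  obtain ⟨x, hx, rfl⟩ := hC; exact compIn_subset hx

lemma compIn_eq_of_mem_comps {E : Set (α × α)} (hE : IsSymm E) {A : Set α} {C : Set α}
    (hC : C ∈ compsIn E A) {x : α} (hx : x ∈ C) : compIn E A x = C := by
  obtain ⟨y, hy, rfl⟩ := hC; exact compIn_eq_of_mem hE hx

lemma compsIn_disjoint {E : Set (α × α)} (hE : IsSymm E) {A : Set α} {C C' : Set α}
    (hC : C ∈ compsIn E A) (hC' : C' ∈ compsIn E A) (hne : C ≠ C') : Disjoint C C' := by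
  rw [Set.disjoint_left]
  intro x hx hx'
  exact hne ((compIn_eq_of_mem_comps hE hC hx).symm.trans
    (compIn_eq_of_mem_comps hE hC' hx'))

lemma sUnion_compsIn {E : Set (α × α)} {A : Set α} : ⋃₀ compsIn E A = A := by
  apply Set.Subset.antisymm
  · intro x hx
    obtain ⟨C, hC, hxC⟩ := hx
    exact compsIn_subset hC hxC
  · intro x hx
    exact ⟨compIn E A x, compIn_mem_compsIn hx, mem_compIn_self x⟩

end Tutte

section Counting

variable {β : Type v}

lemma mul_ncard_le_ncard_of_disjoint [Finite β] (d : ℕ) (𝒟 : Set (Set β)) :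
    ∀ F : Set β, 𝒟.Pairwise Disjoint → (∀ D ∈ 𝒟, d ≤ D.ncard) → ⋃₀ 𝒟 ⊆ F →
      d * 𝒟.ncard ≤ F.ncard := by
  refine Set.Finite.induction_on 𝒟 (Set.toFinite 𝒟) (by simp) ?_
  intro D 𝒟 hD h𝒟 ih F hpair hcard hsub
  have hDmem : ∀ D' ∈ 𝒟, Disjoint D D' := by
    intro D' hD'
    refine hpair (Set.mem_insert _ _) (Set.mem_insert_of_mem _ hD') ?_
    rintro rfl; exact hD hD'
  have hsub' : ⋃₀ 𝒟 ⊆ F \ D := by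
    rintro x ⟨D', hD', hx⟩
    refine ⟨hsub ⟨D', Set.mem_insert_of_mem _ hD', hx⟩, fun hxD => ?_⟩
    exact (hDmem D' hD').le_bot ⟨hxD, hx⟩
  have ih' := ih (F \ D) (hpair.mono (Set.subset_insert _ _))
    (fun D' hD' => hcard D' (Set.mem_insert_of_mem _ hD')) hsub'
  have hDF : D ⊆ F := fun x hx => hsub ⟨D, Set.mem_insert _ _, hx⟩
  have h1 : (insert D 𝒟).ncard = 𝒟.ncard + 1 := Set.ncard_insert_of_notMem hD
  have h2 : (F \ D).ncard = F.ncard - D.ncard := Set.ncard_diff hDF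
  have h3 : D.ncard ≤ F.ncard := Set.ncard_le_ncard hDF
  have h4 := hcard D (Set.mem_insert _ _)
  rw [h1, Nat.mul_add, Nat.mul_one]
  rw [h2] at ih'
  omega

lemma parity_sUnion [Finite β] (𝒟 : Set (Set β)) :
    𝒟.Pairwise Disjoint → (⋃₀ 𝒟).ncard % 2 = ({D ∈ 𝒟 | Odd D.ncard}).ncard % 2 := by
  refine Set.Finite.induction_on 𝒟 (Set.toFinite 𝒟) (by simp) ?_
  intro D 𝒟 hD h𝒟 ih hpair
  have hDmem : ∀ D' ∈ 𝒟, Disjoint D D' := by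
    intro D' hD'
    refine hpair (Set.mem_insert _ _) (Set.mem_insert_of_mem _ hD') ?_
    rintro rfl; exact hD hD'
  have hdisj : Disjoint D (⋃₀ 𝒟) := by
    rw [Set.disjoint_sUnion_right]
    exact hDmem
  have h1 : (⋃₀ insert D 𝒟).ncard = D.ncard + (⋃₀ 𝒟).ncard := by
    rw [Set.sUnion_insert, Set.ncard_union_eq hdisj]
  have ih' := ih (hpair.mono (Set.subset_insert _ _))
  by_cases hodd : Odd D.ncard
  · have hfil : {D' ∈ insert D 𝒟 | Odd D'.ncard}
        = insert D {D' ∈ 𝒟 | Odd D'.ncard} := by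
      ext D'; simp only [Set.mem_setOf_eq, Set.mem_insert_iff]
      constructor
      · rintro ⟨rfl | h, h2⟩
        · exact Or.inl rfl
        · exact Or.inr ⟨h, h2⟩
      · rintro (rfl | ⟨h, h2⟩)
        · exact ⟨Or.inl rfl, hodd⟩
        · exact ⟨Or.inr h, h2⟩
    have hnot : D ∉ {D' ∈ 𝒟 | Odd D'.ncard} := fun h => hD h.1
    rw [h1, hfil, Set.ncard_insert_of_notMem hnot]
    rw [Nat.odd_iff] at hodd
    omega
  · have hfil : {D' ∈ insert D 𝒟 | Odd D'.ncard} = {D' ∈ 𝒟 | Odd D'.ncard} := by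
      ext D'; simp only [Set.mem_setOf_eq, Set.mem_insert_iff]
      constructor
      · rintro ⟨rfl | h, h2⟩
        · exact absurd h2 hodd
        · exact ⟨h, h2⟩
      · rintro ⟨h, h2⟩; exact ⟨Or.inr h, h2⟩
    rw [Nat.odd_iff] at hodd
    rw [h1, hfil]
    omega

end Counting

section OddComps

variable {α : Type u}

/-- The odd connectivity components of `A`. -/
def oddComps (E : Set (α × α)) (A : Set α) : Set (Set α) :=
  {C ∈ compsIn E A | Odd C.ncard}

lemma oddComps_subset_compsIn {E : Set (α × α)} {A : Set α} :
    oddComps E A ⊆ compsIn E A := fun _ h => h.1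

lemma compsIn_pairwise_disjoint {E : Set (α × α)} (hE : IsSymm E) (A : Set α) :
    (compsIn E A).Pairwise Disjoint := fun _ hC _ hC' hne => compsIn_disjoint hE hC hC' hne

lemma parity_oddComps [Finite α] {E : Set (α × α)} (hE : IsSymm E) (A : Set α) :
    A.ncard % 2 = (oddComps E A).ncard % 2 := by
  have := parity_sUnion (compsIn E A) (compsIn_pairwise_disjoint hE A)
  rwa [sUnion_compsIn] at this

lemma compIn_self_of_mem {α : Type u} {E : Set (α × α)} (hE : IsSymm E) {A C : Set α}
    (hC : C ∈ compsIn E A) {x : α} (hx : x ∈ C) : compIn E C x = C := by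
  have h1 : compIn E A x = C := compIn_eq_of_mem_comps hE hC hx
  have h2 := compIn_local hE (le_refl A) x
  rw [h1, Set.inter_eq_self_of_subset_left (compsIn_subset hC)] at h2
  exact h2.symm

lemma comps_transfer {α : Type u} {E : Set (α × α)} (hE : IsSymm E) {A A' C : Set α}
    (hA' : A' ⊆ A) (hC : C ∈ compsIn E A) {D : Set α} (hD : D ∈ compsIn E (C ∩ A')) :
    D ∈ compsIn E A' := by
  obtain ⟨x, hx, rfl⟩ := hD
  have h1 : compIn E A' x = compIn E (compIn E A x ∩ A') x := compIn_local hE hA' x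
  have h2 : compIn E A x = C := by
    have hxC : x ∈ C := hx.1
    exact compIn_eq_of_mem_comps hE hC hxC
  rw [h2] at h1
  exact ⟨x, hx.2, h1.symm⟩

lemma comps_persist {α : Type u} {E : Set (α × α)} (hE : IsSymm E) {A A' C : Set α}
    (hA' : A' ⊆ A) (hC : C ∈ compsIn E A) (hCA' : C ⊆ A') : C ∈ compsIn E A' := by
  obtain ⟨x, hx⟩ := compsIn_nonempty hC
  have h1 : compIn E A' x = compIn E (compIn E A x ∩ A') x := compIn_local hE hA' x
  have h2 : compIn E A x = C := compIn_eq_of_mem_comps hE hC hx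
  rw [h2, Set.inter_eq_self_of_subset_left hCA', compIn_self_of_mem hE hC hx] at h1
  exact ⟨x, hCA' hx, h1.symm⟩

/-- Excision: removing a set of vertices contained in a single component `C`. -/
lemma excision [Finite α] {E : Set (α × α)} (hE : IsSymm E) {A A' C : Set α}
    (hA' : A' ⊆ A) (hC : C ∈ compsIn E A) (hdiff : A \ A' ⊆ C) :
    (oddComps E A \ {C}).ncard + (oddComps E (C ∩ A')).ncard ≤ (oddComps E A').ncard := by
  have hsub1 : oddComps E A \ {C} ⊆ oddComps E A' := by
    rintro C₀ ⟨⟨hC₀, hodd⟩, hne⟩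
    have hne' : C₀ ≠ C := hne
    have hdisj : Disjoint C₀ C := compsIn_disjoint hE hC₀ hC hne'
    have hC₀A' : C₀ ⊆ A' := by
      intro x hx
      by_contra hxA'
      have hxA : x ∈ A := compsIn_subset hC₀ hx
      exact hdisj.le_bot ⟨hx, hdiff ⟨hxA, hxA'⟩⟩
    exact ⟨comps_persist hE hA' hC₀ hC₀A', hodd⟩
  have hsub2 : oddComps E (C ∩ A') ⊆ oddComps E A' := by
    rintro D ⟨hD, hodd⟩
    exact ⟨comps_transfer hE hA' hC hD, hodd⟩
  have hdisj : Disjoint (oddComps E A \ {C}) (oddComps E (C ∩ A')) := by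
    rw [Set.disjoint_left]
    rintro D ⟨⟨hD, _⟩, hne⟩ ⟨hD', _⟩
    have h1 : Disjoint D C := compsIn_disjoint hE hD hC hne
    have h2 : D ⊆ C := (compsIn_subset hD').trans Set.inter_subset_left
    obtain ⟨x, hx⟩ := compsIn_nonempty hD
    exact h1.le_bot ⟨hx, h2 hx⟩
  calc (oddComps E A \ {C}).ncard + (oddComps E (C ∩ A')).ncard
      = ((oddComps E A \ {C}) ∪ oddComps E (C ∩ A')).ncard :=
        (Set.ncard_union_eq hdisj).symm
    _ ≤ (oddComps E A').ncard := Set.ncard_le_ncard (Set.union_subset hsub1 hsub2)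

end OddComps




section TutteMain

variable {α : Type u}

lemma KE_subset_prod {E : Set (α × α)} {B : Set α} : KE E B ⊆ B ×ˢ B :=
  fun _ h => h.2

lemma coveredVerts_subset {M : Set (α × α)} {B : Set α} (h : M ⊆ B ×ˢ B) :
    coveredVerts M ⊆ B := by
  rintro x ⟨y, hy⟩; exact (h hy).1

lemma mem_pair_iff {a b x y : α} :
    (x, y) ∈ ({(a, b), (b, a)} : Set (α × α)) ↔ (x = a ∧ y = b) ∨ (x = b ∧ y = a) := by
  simp [Prod.ext_iff]

lemma isMatching_union_pair {M : Set (α × α)} (hM : IsMatching M) {a b : α}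
    (ha : a ∉ coveredVerts M) (hb : b ∉ coveredVerts M) :
    IsMatching (M ∪ {(a, b), (b, a)}) := by
  constructor
  · rintro x y (h | h)
    · exact Or.inl (hM.1 _ _ h)
    · right
      simp only [Set.mem_insert_iff, Set.mem_singleton_iff, Prod.mk.injEq] at h ⊢
      tauto
  · rintro x y z (h1 | h1) (h2 | h2)
    · exact hM.2 _ _ _ h1 h2
    · simp only [Set.mem_insert_iff, Set.mem_singleton_iff, Prod.mk.injEq] at h2
      exfalso
      rcases h2 with ⟨rfl, rfl⟩ | ⟨rfl, rfl⟩
      · exact ha ⟨y, h1⟩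
      · exact hb ⟨y, h1⟩
    · simp only [Set.mem_insert_iff, Set.mem_singleton_iff, Prod.mk.injEq] at h1
      exfalso
      rcases h1 with ⟨rfl, rfl⟩ | ⟨rfl, rfl⟩
      · exact ha ⟨z, h2⟩
      · exact hb ⟨z, h2⟩
    · simp only [Set.mem_insert_iff, Set.mem_singleton_iff, Prod.mk.injEq] at h1 h2
      rcases h1 with ⟨rfl, rfl⟩ | ⟨rfl, rfl⟩ <;>
        rcases h2 with ⟨h2a, rfl⟩ | ⟨h2a, rfl⟩ <;> simp_all

lemma isMatching_iUnion {ι : Type v} (T : ι → Set α) (N : ι → Set (α × α))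
    (hdisj : ∀ i j, i ≠ j → Disjoint (T i) (T j)) (hmatch : ∀ i, IsMatching (N i))
    (hsub : ∀ i, N i ⊆ T i ×ˢ T i) : IsMatching (⋃ i, N i) := by
  constructor
  · intro x y h
    rw [Set.mem_iUnion] at h ⊢
    obtain ⟨i, hi⟩ := h
    exact ⟨i, (hmatch i).1 _ _ hi⟩
  · intro x y z h1 h2
    rw [Set.mem_iUnion] at h1 h2
    obtain ⟨i, hi⟩ := h1
    obtain ⟨j, hj⟩ := h2
    have hij : i = j := by
      by_contra hne
      exact (hdisj i j hne).le_bot ⟨(hsub i hi).1, (hsub j hj).1⟩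
    subst hij
    exact (hmatch i).2 _ _ _ hi hj

lemma walk_stays_in_closed {E : Set (α × α)} {B C : Set α}
    (hclosed : ∀ x ∈ C, ∀ y, (x, y) ∈ KE E B → y ∈ C) :
    ∀ {m : ℕ} {x y : α}, x ∈ C → WalkLen (KE E B) m x y → y ∈ C := by
  intro m
  induction m with
  | zero => intro x y hx h; cases h; exact hx
  | succ m ihm =>
      rintro x y hx ⟨z, hz, hw⟩
      exact ihm (hclosed x hx z hz) hw

/-- A nonempty connected closed subset is a component. -/
lemma closed_connected_mem_compsIn {E : Set (α × α)} (hE : IsSymm E) {B C : Set α}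
    {x₀ : α} (hx₀ : x₀ ∈ C) (hx₀B : x₀ ∈ B)
    (hconn : C ⊆ compIn E B x₀)
    (hclosed : ∀ x ∈ C, ∀ y, (x, y) ∈ KE E B → y ∈ C) :
    C ∈ compsIn E B := by
  refine ⟨x₀, hx₀B, ?_⟩
  apply Set.Subset.antisymm hconn
  rintro y ⟨m, hm⟩
  exact walk_stays_in_closed hclosed hx₀ hm

/-- **Tutte's theorem**, raw version: if for every `u ⊆ R` the number of odd components
of `R \ u` is at most `|u|`, then there is a matching inside `R` covering `R`. -/
theorem tutte_raw [Finite α] {E : Set (α × α)} (hE : IsSymm E) :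
    ∀ (n : ℕ) (R : Set α), R.ncard = n →
      (∀ u ⊆ R, (oddComps E (R \ u)).ncard ≤ u.ncard) →
      ∃ M, M ⊆ KE E R ∧ IsMatching M ∧ R ⊆ coveredVerts M := by
  classical
  intro n
  induction n using Nat.strong_induction_on with
  | _ n ih =>
  intro R hRn hcond
  set 𝒰 : Set (Set α) := {u | u ⊆ R ∧ (oddComps E (R \ u)).ncard = u.ncard} with h𝒰def
  have hEmptyMem : ∅ ∈ 𝒰 := by
    refine ⟨Set.empty_subset R, ?_⟩
    have := hcond ∅ (Set.empty_subset R)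
    simp only [Set.ncard_empty, Nat.le_zero] at this
    rw [Set.diff_empty] at this
    simp [this]
  have h𝒰ne : 𝒰.Nonempty := ⟨∅, hEmptyMem⟩
  have hbdd : BddAbove (Set.ncard '' 𝒰) := by
    refine ⟨Nat.card α, ?_⟩
    rintro _ ⟨u', _, rfl⟩
    rw [← Set.ncard_univ]
    exact Set.ncard_le_ncard (Set.subset_univ u') (Set.toFinite _)
  obtain ⟨u, hu𝒰, hueqcard⟩ := Nat.sSup_mem (h𝒰ne.image _) hbdd
  have humax : ∀ u' ∈ 𝒰, u'.ncard ≤ u.ncard := fun u' hu' =>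
    hueqcard ▸ le_csSup hbdd ⟨u', hu', rfl⟩
  obtain ⟨huR, hueq⟩ := hu𝒰
  set A := R \ u with hAdef
  have huA : ∀ x ∈ u, x ∉ A := fun x hx hx' => hx'.2 hx
  -- Step 1: every component of `A` is odd
  have hallodd : compsIn E A = oddComps E A := by
    refine Set.Subset.antisymm ?_ oddComps_subset_compsIn
    intro C hC
    refine ⟨hC, ?_⟩
    by_contra hodd
    obtain ⟨v, hv⟩ := compsIn_nonempty hC
    have hvA : v ∈ A := compsIn_subset hC hv
    have hA'sub : A \ {v} ⊆ A := Set.diff_subset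
    have hdiffC : A \ (A \ {v}) ⊆ C := by
      intro x hx
      have : x = v := by
        rcases hx with ⟨hx1, hx2⟩
        simp only [Set.mem_diff, Set.mem_singleton_iff, not_and, not_not] at hx2
        exact hx2 hx1
      subst this; exact hv
    have hkey := excision hE hA'sub hC hdiffC
    have hCA' : C ∩ (A \ {v}) = C \ {v} := by
      ext x
      simp only [Set.mem_inter_iff, Set.mem_diff, Set.mem_singleton_iff]
      constructor
      · rintro ⟨h1, _, h3⟩; exact ⟨h1, h3⟩
      · rintro ⟨h1, h2⟩; exact ⟨h1, compsIn_subset hC h1, h2⟩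
    rw [hCA'] at hkey
    have hpar := parity_oddComps hE (C \ {v})
    have hCcard : (C \ {v}).ncard = C.ncard - 1 := Set.ncard_diff_singleton_of_mem hv
    have hCpos : 0 < C.ncard := by
      rw [Set.ncard_pos]; exact ⟨v, hv⟩
    rw [Nat.odd_iff] at hodd
    have h1oc : 1 ≤ (oddComps E (C \ {v})).ncard := by omega
    have hCnotodd : C ∉ oddComps E A := fun h => by
      have := h.2; rw [Nat.odd_iff] at this; exact hodd this
    rw [Set.diff_singleton_eq_self hCnotodd] at hkey
    have hu'R : insert v u ⊆ R := Set.insert_subset hvA.1 huR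
    have hdiffR : R \ insert v u = A \ {v} := by
      ext x
      simp only [hAdef, Set.mem_diff, Set.mem_insert_iff, Set.mem_singleton_iff]
      tauto
    have hvu : v ∉ u := hvA.2
    have hcard' : (insert v u).ncard = u.ncard + 1 := Set.ncard_insert_of_notMem hvu
    have hle := hcond (insert v u) hu'R
    rw [hdiffR, hcard'] at hle
    have hmem𝒰 : insert v u ∈ 𝒰 := by
      refine ⟨hu'R, ?_⟩
      rw [hdiffR, hcard']
      omega
    have := humax _ hmem𝒰
    omega
  have hocA : (oddComps E A).ncard = u.ncard := hueq
  have hcompcard : (compsIn E A).ncard = u.ncard := by rw [hallodd]; exact hocA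
  -- Step 3 (Hall): the components can be matched injectively into `u`
  let ι := {C : Set α // C ∈ compsIn E A}
  let NC : ι → Set α := fun C => {w ∈ u | ∃ x ∈ (C : Set α), (x, w) ∈ E}
  let t : ι → Finset α := fun C => (Set.toFinite (NC C)).toFinset
  have hhall : ∀ s : Finset ι, s.card ≤ (s.biUnion t).card := by
    intro s
    set u₂ : Set α := ↑(s.biUnion t) with hu₂def
    have hu₂u : u₂ ⊆ u := by
      intro w hw
      rw [hu₂def, Finset.coe_biUnion] at hw
      simp only [Set.mem_iUnion] at hw
      obtain ⟨C, _, hC⟩ := hw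
      rw [Finset.mem_coe, Set.Finite.mem_toFinset] at hC
      exact hC.1
    have hA₂ : A ⊆ R \ u₂ := fun x hx => ⟨hx.1, fun hxu => hx.2 (hu₂u hxu)⟩
    have hmem : ∀ C ∈ s, (C : Set α) ∈ oddComps E (R \ u₂) := by
      intro C hCs
      have hC := C.2
      have hCodd : (C : Set α) ∈ oddComps E A := by rw [← hallodd]; exact hC
      refine ⟨?_, hCodd.2⟩
      obtain ⟨x₀, hx₀⟩ := compsIn_nonempty hC
      refine closed_connected_mem_compsIn hE hx₀ (hA₂ (compsIn_subset hC hx₀)) ?_ ?_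
      · intro y hy
        have hCeq : (C : Set α) = compIn E A x₀ := (compIn_eq_of_mem_comps hE hC hx₀).symm
        rw [hCeq] at hy
        exact compIn_mono hA₂ x₀ hy
      · intro x hx z hz
        by_cases hzA : z ∈ A
        · have hedge : (x, z) ∈ KE E A := ⟨hz.1, compsIn_subset hC hx, hzA⟩
          rw [← compIn_eq_of_mem_comps hE hC hx]
          exact reach_of_edge hedge
        · exfalso
          have hzu : z ∈ u := by
            rcases hz.2.2 with ⟨hzR, _⟩
            by_contra hzu
            exact hzA ⟨hzR, hzu⟩
          have hzu₂ : z ∈ u₂ := by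
            rw [hu₂def, Finset.coe_biUnion]
            simp only [Set.mem_iUnion]
            refine ⟨C, hCs, ?_⟩
            rw [Finset.mem_coe, Set.Finite.mem_toFinset]
            exact ⟨hzu, x, hx, hz.1⟩
          exact hz.2.2.2 hzu₂
    have hsub : (fun C : ι => (C : Set α)) '' ↑s ⊆ oddComps E (R \ u₂) := by
      rintro _ ⟨C, hCs, rfl⟩
      exact hmem C (by exact hCs)
    have hcount : ((fun C : ι => (C : Set α)) '' ↑s).ncard = s.card := by
      rw [Set.ncard_image_of_injective _ Subtype.val_injective, Set.ncard_coe_finset]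
    have hle1 : ((fun C : ι => (C : Set α)) '' ↑s).ncard ≤ (oddComps E (R \ u₂)).ncard :=
      Set.ncard_le_ncard hsub (Set.toFinite _)
    have hle2 := hcond u₂ (hu₂u.trans huR)
    rw [hcount] at hle1
    have := hle1.trans hle2
    rwa [hu₂def, Set.ncard_coe_finset] at this
  obtain ⟨f, hfinj, hft⟩ := (Finset.all_card_le_biUnion_card_iff_exists_injective t).mp hhall
  have hfu : ∀ C : ι, f C ∈ u ∧ ∃ x ∈ (C : Set α), (x, f C) ∈ E := by
    intro C
    have := hft C
    rw [Set.Finite.mem_toFinset] at this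
    exact ⟨this.1, this.2⟩
  have hcardι : Nat.card ι = u.ncard := by
    rw [Nat.card_coe_set_eq]
    exact hcompcard
  have hfsurj : ∀ w ∈ u, ∃ C : ι, f C = w := by
    intro w hw
    by_contra hcon
    push_neg at hcon
    have hrange : Set.range f ⊆ u \ {w} := by
      rintro _ ⟨C, rfl⟩
      exact ⟨(hfu C).1, hcon C⟩
    have h1 : (Set.range f).ncard = Nat.card ι := by
      rw [← Set.image_univ, Set.ncard_image_of_injective _ hfinj, Set.ncard_univ]
    have h2 : (u \ {w}).ncard = u.ncard - 1 := Set.ncard_diff_singleton_of_mem hw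
    have h3 : (Set.range f).ncard ≤ (u \ {w}).ncard := Set.ncard_le_ncard hrange (Set.toFinite _)
    have hwpos : 0 < u.ncard := by rw [Set.ncard_pos]; exact ⟨w, hw⟩
    omega
  -- Step 2: choose x_C and the recursive matchings
  have hx : ∀ C : ι, ∃ x, x ∈ (C : Set α) ∧ (x, f C) ∈ E := by
    intro C; obtain ⟨_, x, hx1, hx2⟩ := hfu C; exact ⟨x, hx1, hx2⟩
  choose xC hxC hxCf using hx
  have hrec : ∀ C : ι, ∃ M, M ⊆ KE E ((C : Set α) \ {xC C}) ∧ IsMatching M ∧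
      ((C : Set α) \ {xC C}) ⊆ coveredVerts M := by
    intro C
    have hCodd : Odd (C : Set α).ncard := by
      have : (C : Set α) ∈ oddComps E A := by rw [← hallodd]; exact C.2
      exact this.2
    have hCsubA : (C : Set α) ⊆ A := compsIn_subset C.2
    set R' := (C : Set α) \ {xC C} with hR'def
    have hR'A : R' ⊆ A := (Set.diff_subset).trans hCsubA
    have hR'card : R'.ncard = (C : Set α).ncard - 1 := Set.ncard_diff_singleton_of_mem (hxC C)
    have hcond' : ∀ s ⊆ R', (oddComps E (R' \ s)).ncard ≤ s.ncard := by
      intro s hsR'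
      by_contra hgt
      push_neg at hgt
      have hpar := parity_oddComps hE (R' \ s)
      have h1 : (R' \ s).ncard = R'.ncard - s.ncard := Set.ncard_diff hsR'
      have h2 : s.ncard ≤ R'.ncard := Set.ncard_le_ncard hsR' (Set.toFinite _)
      have hCoddm := hCodd
      rw [Nat.odd_iff] at hCoddm
      have hCpos : 0 < (C : Set α).ncard := by rw [Set.ncard_pos]; exact ⟨_, hxC C⟩
      have hge2 : s.ncard + 2 ≤ (oddComps E (R' \ s)).ncard := by omega
      set A' := A \ insert (xC C) s with hA'def
      have hA'A : A' ⊆ A := Set.diff_subset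
      have hdiffC : A \ A' ⊆ (C : Set α) := by
        intro x hx'
        have hxmem : x ∈ insert (xC C) s := by
          rcases hx' with ⟨h1', h2'⟩
          simp only [hA'def, Set.mem_diff, not_and, not_not] at h2'
          exact h2' h1'
        rcases hxmem with rfl | hxs
        · exact hxC C
        · exact (hsR' hxs).1
      have hkey := excision hE hA'A C.2 hdiffC
      have hCA' : (C : Set α) ∩ A' = R' \ s := by
        ext x
        simp only [hA'def, hR'def, Set.mem_inter_iff, Set.mem_diff, Set.mem_insert_iff,
          Set.mem_singleton_iff]
        constructor
        · rintro ⟨h1', h2', h3'⟩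
          push_neg at h3'
          exact ⟨⟨h1', h3'.1⟩, h3'.2⟩
        · rintro ⟨⟨h1', h2'⟩, h3'⟩
          refine ⟨h1', hCsubA h1', ?_⟩
          push_neg
          exact ⟨h2', h3'⟩
      rw [hCA'] at hkey
      have hCoddmem : (C : Set α) ∈ oddComps E A := by rw [← hallodd]; exact C.2
      have hocd : (oddComps E A \ {(C : Set α)}).ncard = u.ncard - 1 := by
        rw [Set.ncard_diff_singleton_of_mem hCoddmem, hocA]
      have hupos : 0 < u.ncard := by
        rw [← hocA, Set.ncard_pos]
        exact ⟨_, hCoddmem⟩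
      set u'' := u ∪ insert (xC C) s with hu''def
      have hu''R : u'' ⊆ R := by
        rintro x (hx' | hx')
        · exact huR hx'
        · rcases hx' with rfl | hx'
          · exact (hCsubA (hxC C)).1
          · exact (hR'A (hsR' hx')).1
      have hdisj2 : Disjoint u (insert (xC C) s) := by
        rw [Set.disjoint_right]
        rintro x (rfl | hx')
        · exact (hCsubA (hxC C)).2
        · exact (hR'A (hsR' hx')).2
      have hxCs : xC C ∉ s := fun h => (hsR' h).2 rfl
      have hu''card : u''.ncard = u.ncard + s.ncard + 1 := by
        rw [hu''def, Set.ncard_union_eq hdisj2, Set.ncard_insert_of_notMem hxCs]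
        omega
      have hRu'' : R \ u'' = A' := by
        ext x
        simp only [hu''def, hA'def, hAdef, Set.mem_diff, Set.mem_union]
        tauto
      have hle := hcond u'' hu''R
      rw [hRu''] at hle
      have hmem𝒰 : u'' ∈ 𝒰 := by
        refine ⟨hu''R, ?_⟩
        rw [hRu'']
        omega
      have := humax _ hmem𝒰
      omega
    have hR'lt : R'.ncard < n := by
      have h1 : (C : Set α).ncard ≤ R.ncard :=
        Set.ncard_le_ncard (hCsubA.trans Set.diff_subset) (Set.toFinite _)
      have h2 : 0 < (C : Set α).ncard := by rw [Set.ncard_pos]; exact ⟨_, hxC C⟩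
      omega
    exact ih R'.ncard hR'lt R' rfl hcond'
  choose MC hMC1 hMC2 hMC3 using hrec
  -- Step 4: assemble
  let TC : ι → Set α := fun C => insert (f C) (C : Set α)
  let NN : ι → Set (α × α) := fun C => MC C ∪ {(xC C, f C), (f C, xC C)}
  have hTdisj : ∀ C C' : ι, C ≠ C' → Disjoint (TC C) (TC C') := by
    intro C C' hne
    have hCCne : (C : Set α) ≠ (C' : Set α) := fun h => hne (Subtype.ext h)
    have hCdisj : Disjoint (C : Set α) (C' : Set α) := compsIn_disjoint hE C.2 C'.2 hCCne
    rw [Set.disjoint_left]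
    rintro x (rfl | hx') hmem
    · rcases hmem with heq | hx''
      · exact hne (hfinj heq)
      · exact huA _ (hfu C).1 (compsIn_subset C'.2 hx'')
    · rcases hmem with rfl | hx''
      · exact huA _ (hfu C').1 (compsIn_subset C.2 hx')
      · exact hCdisj.le_bot ⟨hx', hx''⟩
  have hMCcov : ∀ C : ι, coveredVerts (MC C) ⊆ (C : Set α) \ {xC C} := fun C =>
    coveredVerts_subset ((hMC1 C).trans KE_subset_prod)
  have hNNmatch : ∀ C : ι, IsMatching (NN C) := by
    intro C
    refine isMatching_union_pair (hMC2 C) ?_ ?_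
    · intro h
      exact (hMCcov C h).2 rfl
    · intro h
      exact huA _ (hfu C).1 ((Set.diff_subset.trans (compsIn_subset C.2)) (hMCcov C h))
  have hNNsub : ∀ C : ι, NN C ⊆ TC C ×ˢ TC C := by
    rintro C ⟨x, y⟩ (h | h)
    · have := (hMC1 C).trans KE_subset_prod
      have h2 := this h
      exact ⟨Set.mem_insert_of_mem _ h2.1.1, Set.mem_insert_of_mem _ h2.2.1⟩
    · simp only [Set.mem_insert_iff, Set.mem_singleton_iff, Prod.mk.injEq] at h
      rcases h with ⟨rfl, rfl⟩ | ⟨rfl, rfl⟩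
      · exact ⟨Set.mem_insert_of_mem _ (hxC C), Set.mem_insert _ _⟩
      · exact ⟨Set.mem_insert _ _, Set.mem_insert_of_mem _ (hxC C)⟩
  refine ⟨⋃ C : ι, NN C, ?_, isMatching_iUnion TC NN hTdisj hNNmatch hNNsub, ?_⟩
  · rintro ⟨x, y⟩ hxy
    rw [Set.mem_iUnion] at hxy
    obtain ⟨C, hC⟩ := hxy
    rcases hC with h | h
    · exact KE_mono ((Set.diff_subset.trans (compsIn_subset C.2)).trans Set.diff_subset)
        (hMC1 C h)
    · simp only [Set.mem_insert_iff, Set.mem_singleton_iff, Prod.mk.injEq] at h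
      have hxCR : xC C ∈ R := (compsIn_subset C.2 (hxC C)).1
      have hfCR : f C ∈ R := huR (hfu C).1
      rcases h with ⟨rfl, rfl⟩ | ⟨rfl, rfl⟩
      · exact ⟨hxCf C, hxCR, hfCR⟩
      · exact ⟨hE _ _ (hxCf C), hfCR, hxCR⟩
  · intro w hw
    by_cases hwu : w ∈ u
    · obtain ⟨C, rfl⟩ := hfsurj w hwu
      exact ⟨xC C, Set.mem_iUnion.mpr ⟨C, Or.inr (by
        simp only [Set.mem_insert_iff, Set.mem_singleton_iff, Prod.mk.injEq]; tauto)⟩⟩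
    · have hwA : w ∈ A := ⟨hw, hwu⟩
      set C : ι := ⟨compIn E A w, compIn_mem_compsIn hwA⟩ with hCdef
      have hwC : w ∈ (C : Set α) := mem_compIn_self w
      by_cases hwx : w = xC C
      · exact ⟨f C, Set.mem_iUnion.mpr ⟨C, Or.inr (by
          simp only [Set.mem_insert_iff, Set.mem_singleton_iff, Prod.mk.injEq]
          tauto)⟩⟩
      · have := hMC3 C ⟨hwC, hwx⟩
        obtain ⟨y, hy⟩ := this
        exact ⟨y, Set.mem_iUnion.mpr ⟨C, Or.inl hy⟩⟩

end TutteMain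


section Reduction

variable {W : Type u}

/-- The auxiliary graph on `W ⊕ W`: original edges between `inl`s, a clique on the `inr`s,
and each `inl v` with `v ∉ Z` joined to every `inr`. -/
def auxRel (E : Set (W × W)) (Z : Set W) : (W ⊕ W) → (W ⊕ W) → Prop
  | Sum.inl x, Sum.inl y => (x, y) ∈ E
  | Sum.inr a, Sum.inr b => a ≠ b
  | Sum.inl v, Sum.inr _ => v ∉ Z
  | Sum.inr _, Sum.inl v => v ∉ Z

def auxE (E : Set (W × W)) (Z : Set W) : Set ((W ⊕ W) × (W ⊕ W)) :=
  {p | auxRel E Z p.1 p.2}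

lemma auxE_ll {E : Set (W × W)} {Z : Set W} {x y : W} :
    (Sum.inl x, Sum.inl y) ∈ auxE E Z ↔ (x, y) ∈ E := Iff.rfl

lemma auxE_rr {E : Set (W × W)} {Z : Set W} {a b : W} :
    (Sum.inr a, Sum.inr b) ∈ auxE E Z ↔ a ≠ b := Iff.rfl

lemma auxE_lr {E : Set (W × W)} {Z : Set W} {v a : W} :
    (Sum.inl v, Sum.inr a) ∈ auxE E Z ↔ v ∉ Z := Iff.rfl

lemma auxE_rl {E : Set (W × W)} {Z : Set W} {a v : W} :
    (Sum.inr a, Sum.inl v) ∈ auxE E Z ↔ v ∉ Z := Iff.rfl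

lemma auxE_symm {E : Set (W × W)} (hsymm : IsSymm E) (Z : Set W) : IsSymm (auxE E Z) := by
  rintro (x | x) (y | y) h
  · exact hsymm _ _ h
  · exact h
  · exact h
  · exact Ne.symm h

lemma walk_inl_transfer {E : Set (W × W)} {Z : Set W} {C : Set (W ⊕ W)}
    (hCZ : C ⊆ Sum.inl '' Z) :
    ∀ {n : ℕ} {x y : W}, WalkLen (KE (auxE E Z) C) n (Sum.inl x) (Sum.inl y) →
      WalkLen (E ∩ ((Sum.inl ⁻¹' C) ×ˢ (Sum.inl ⁻¹' C))) n x y := by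
  intro n
  induction n with
  | zero => intro x y h; exact Sum.inl_injective h
  | succ n ihn =>
      rintro x y ⟨z, hz, hw⟩
      obtain ⟨w, hwZ, rfl⟩ := hCZ hz.2.2
      exact ⟨w, ⟨auxE_ll.mp hz.1, hz.2.1, hz.2.2⟩, ihn hw⟩

lemma compsIn_ncard_le {α : Type v} [Finite α] {E : Set (α × α)} (hE : IsSymm E)
    (A : Set α) : (compsIn E A).ncard ≤ A.ncard := by
  have := mul_ncard_le_ncard_of_disjoint 1 (compsIn E A) A
    (compsIn_pairwise_disjoint hE A)
    (fun D hD => by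
      have : 0 < D.ncard := by rw [Set.ncard_pos]; exact compsIn_nonempty hD
      omega)
    (by rw [sUnion_compsIn])
  omega

/-- Degree counting: the number of (ordered) edges landing in `S` is at most `d|S| + 1`. -/
lemma edges_into_bound [Finite W] {E : Set (W × W)} (hsymm : IsSymm E) {d : ℕ}
    (hdeg : ∀ x : W, (nbrs E x).ncard ≤ d + 1)
    (hexc : ∀ x y : W, d < (nbrs E x).ncard → d < (nbrs E y).ncard → x = y)
    (S : Set W) : (E ∩ (Set.univ ×ˢ S)).ncard ≤ d * S.ncard + 1 := by
  have hexc1 : ({x : W | d < (nbrs E x).ncard}).ncard ≤ 1 := by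
    rw [Set.ncard_le_one_iff (Set.toFinite _)]
    intro a b ha hb
    exact hexc a b ha hb
  have claim : ∀ S : Set W, (E ∩ (Set.univ ×ˢ S)).ncard
      ≤ d * S.ncard + ({x ∈ S | d < (nbrs E x).ncard}).ncard := by
    intro S
    refine Set.Finite.induction_on S (Set.toFinite S) (by simp) ?_
    intro y S hy hS ihS
    have hsplit : E ∩ (Set.univ ×ˢ insert y S)
        = (E ∩ (Set.univ ×ˢ S)) ∪ (E ∩ (Set.univ ×ˢ ({y} : Set W))) := by
      ext ⟨p, q⟩
      simp only [Set.mem_inter_iff, Set.mem_prod, Set.mem_univ, true_and,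
        Set.mem_insert_iff, Set.mem_union, Set.mem_singleton_iff]
      tauto
    have hy' : E ∩ (Set.univ ×ˢ ({y} : Set W)) = (fun x => (x, y)) '' (nbrs E y) := by
      ext ⟨p, q⟩
      simp only [Set.mem_inter_iff, Set.mem_prod, Set.mem_univ, true_and,
        Set.mem_singleton_iff, Set.mem_image, Prod.mk.injEq]
      constructor
      · rintro ⟨h1, rfl⟩
        exact ⟨p, hsymm _ _ h1, rfl, rfl⟩
      · rintro ⟨x, hx, rfl, rfl⟩
        exact ⟨hsymm _ _ hx, rfl⟩
    have hycard : (E ∩ (Set.univ ×ˢ ({y} : Set W))).ncard = (nbrs E y).ncard := by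
      rw [hy']
      exact Set.ncard_image_of_injective _ (fun a b hab => (Prod.mk.injEq _ _ _ _).mp hab |>.1)
    have hunion := Set.ncard_union_le (E ∩ (Set.univ ×ˢ S))
      (E ∩ (Set.univ ×ˢ ({y} : Set W)))
    rw [← hsplit] at hunion
    have hinscard : (insert y S).ncard = S.ncard + 1 := Set.ncard_insert_of_notMem hy
    by_cases hyP : d < (nbrs E y).ncard
    · have hfil : {x ∈ insert y S | d < (nbrs E x).ncard}
          = insert y {x ∈ S | d < (nbrs E x).ncard} := by
        ext x
        simp only [Set.mem_setOf_eq, Set.mem_insert_iff]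
        constructor
        · rintro ⟨rfl | hx, h2⟩
          · exact Or.inl rfl
          · exact Or.inr ⟨hx, h2⟩
        · rintro (rfl | ⟨hx, h2⟩)
          · exact ⟨Or.inl rfl, hyP⟩
          · exact ⟨Or.inr hx, h2⟩
      have hnoty : y ∉ {x ∈ S | d < (nbrs E x).ncard} := fun h => hy h.1
      rw [hfil, Set.ncard_insert_of_notMem hnoty, hinscard]
      have := hdeg y
      rw [Nat.mul_add, Nat.mul_one]
      omega
    · have hfil : {x ∈ insert y S | d < (nbrs E x).ncard}
          = {x ∈ S | d < (nbrs E x).ncard} := by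
        ext x
        simp only [Set.mem_setOf_eq, Set.mem_insert_iff]
        constructor
        · rintro ⟨rfl | hx, h2⟩
          · exact absurd h2 hyP
          · exact ⟨hx, h2⟩
        · rintro ⟨hx, h2⟩
          exact ⟨Or.inr hx, h2⟩
      rw [hfil, hinscard]
      push_neg at hyP
      rw [Nat.mul_add, Nat.mul_one]
      omega
  have hsub : {x ∈ S | d < (nbrs E x).ncard} ⊆ {x : W | d < (nbrs E x).ncard} :=
    fun x hx => hx.2
  have h2 : ({x ∈ S | d < (nbrs E x).ncard}).ncard ≤ 1 :=
    (Set.ncard_le_ncard hsub (Set.toFinite _)).trans hexc1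
  have h3 := claim S
  omega

end Reduction

/-- Let `d ≥ 2` and let `G` be a finite graph in which every vertex has
degree at most `d` except at most one vertex of degree `d + 1`. Let `Z` be the set of
vertices of degree at least `d`. If every `A ⊆ Z` with `|A| ≥ 2` spanning a connected
subgraph sends at least `d` edges to its complement, then `G` has a matching covering
every vertex of `Z`. -/
theorem matching_covering_high_degree {W : Type u} (E : Set (W × W)) (d : ℕ)
    (hd : 2 ≤ d) (hfin : Finite W) (hsymm : IsSymm E) (hirr : Irrefl E)
    (hdeg : MaxDegLE E (d + 1))
    (hexc : ∀ x y : W, d < (nbrs E x).ncard → d < (nbrs E y).ncard → x = y)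
    (hcut : ∀ A : Set W, A ⊆ {z : W | d ≤ (nbrs E z).ncard} → 2 ≤ A.ncard →
      (∀ x ∈ A, ∀ y ∈ A, Reach (E ∩ (A ×ˢ A)) x y) →
      d ≤ (E ∩ (A ×ˢ Aᶜ)).ncard) :
    ∃ M : Set (W × W), M ⊆ E ∧ IsMatching M ∧
      {z : W | d ≤ (nbrs E z).ncard} ⊆ coveredVerts M := by
  haveI : Finite W := hfin
  classical
  set Z : Set W := {z : W | d ≤ (nbrs E z).ncard} with hZdef
  set E' : Set ((W ⊕ W) × (W ⊕ W)) := auxE E Z with hE'def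
  have hE'symm : IsSymm E' := auxE_symm hsymm Z
  have hdeg' : ∀ x : W, (nbrs E x).ncard ≤ d + 1 := fun x => (hdeg x).2
  -- Verify the Tutte condition for the auxiliary graph
  have hcond : ∀ u ⊆ (Set.univ : Set (W ⊕ W)),
      (oddComps E' (Set.univ \ u)).ncard ≤ u.ncard := by
    intro u _
    set A : Set (W ⊕ W) := Set.univ \ u with hAdef
    set S : Set W := {w : W | Sum.inl w ∈ u} with hSdef
    have hScard : ((Sum.inl '' S : Set (W ⊕ W))).ncard = S.ncard :=
      Set.ncard_image_of_injective _ Sum.inl_injective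
    have hSu : (Sum.inl '' S : Set (W ⊕ W)) ⊆ u := by rintro _ ⟨w, hw, rfl⟩; exact hw
    have hnW : (Set.univ : Set (W ⊕ W)).ncard
        = (Set.univ : Set W).ncard + (Set.univ : Set W).ncard := by
      rw [Set.ncard_univ, Set.ncard_univ, Nat.card_sum]
    by_cases hUstar : ∀ a : W, Sum.inr a ∈ u
    · -- all clique vertices removed
      have h1 : (Sum.inr '' (Set.univ : Set W) : Set (W ⊕ W)) ⊆ u := by
        rintro _ ⟨a, _, rfl⟩; exact hUstar a
      have h2 : ((Sum.inr '' (Set.univ : Set W)) : Set (W ⊕ W)).ncard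
          = (Set.univ : Set W).ncard := Set.ncard_image_of_injective _ Sum.inr_injective
      have h3 : (Set.univ : Set W).ncard ≤ u.ncard := by
        rw [← h2]; exact Set.ncard_le_ncard h1 (Set.toFinite _)
      have h4 : (oddComps E' A).ncard ≤ (compsIn E' A).ncard :=
        Set.ncard_le_ncard oddComps_subset_compsIn (Set.toFinite _)
      have h5 := compsIn_ncard_le hE'symm A
      have h6 : A.ncard = (Set.univ : Set (W ⊕ W)).ncard - u.ncard :=
        Set.ncard_diff (Set.subset_univ u)
      have h7 : u.ncard ≤ (Set.univ : Set (W ⊕ W)).ncard :=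
        Set.ncard_le_ncard (Set.subset_univ u) (Set.toFinite _)
      omega
    · push_neg at hUstar
      obtain ⟨a₀, ha₀⟩ := hUstar
      have ha₀A : (Sum.inr a₀ : W ⊕ W) ∈ A := ⟨Set.mem_univ _, ha₀⟩
      set Cstar := compIn E' A (Sum.inr a₀) with hCstardef
      have hCstarmem : Cstar ∈ compsIn E' A := compIn_mem_compsIn ha₀A
      have hbig : ∀ p ∈ A, p ∉ Sum.inl '' Z → p ∈ Cstar := by
        rintro (v | a) hp hpZ
        · have hvZ : v ∉ Z := fun h => hpZ ⟨v, h, rfl⟩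
          exact reach_of_edge ⟨auxE_rl.mpr hvZ, ha₀A, hp⟩
        · by_cases haa : a = a₀
          · subst haa; exact mem_compIn_self _
          · exact reach_of_edge ⟨auxE_rr.mpr (Ne.symm haa), ha₀A, hp⟩
      have hCsub : ∀ C ∈ compsIn E' A, C ≠ Cstar → C ⊆ Sum.inl '' Z := by
        intro C hC hne x hx
        by_contra hxZ
        have hxA : x ∈ A := compsIn_subset hC hx
        have hxCstar : x ∈ Cstar := hbig x hxA hxZ
        exact hne ((compIn_eq_of_mem_comps hE'symm hC hx).symm.trans
          (compIn_eq_of_mem_comps hE'symm hCstarmem hxCstar))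
      -- each non-star component sends at least `d` edges into `S`
      have hkey : ∀ C ∈ compsIn E' A, C ≠ Cstar →
          d ≤ (E ∩ ((Sum.inl ⁻¹' C) ×ˢ S)).ncard := by
        intro C hC hne
        set C₀ : Set W := Sum.inl ⁻¹' C with hC₀def
        have hCZ : C ⊆ Sum.inl '' Z := hCsub C hC hne
        have hC₀Z : C₀ ⊆ Z := by
          intro w hw
          obtain ⟨z, hz, hzeq⟩ := hCZ hw
          rwa [← Sum.inl_injective hzeq]
        obtain ⟨x₁, hx₁⟩ := compsIn_nonempty hC
        have hC₀ne : C₀.Nonempty := by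
          obtain ⟨w, _, rfl⟩ := hCZ hx₁
          exact ⟨w, hx₁⟩
        have hclosure : ∀ x ∈ C₀, ∀ y, (x, y) ∈ E → y ∈ C₀ ∨ y ∈ S := by
          intro x hx y hxy
          by_cases hyS : y ∈ S
          · exact Or.inr hyS
          · left
            have hyA : (Sum.inl y : W ⊕ W) ∈ A := ⟨Set.mem_univ _, hyS⟩
            have hedge : (Sum.inl x, Sum.inl y) ∈ KE E' A :=
              ⟨auxE_ll.mpr hxy, compsIn_subset hC hx, hyA⟩
            have hmem : (Sum.inl y : W ⊕ W) ∈ compIn E' A (Sum.inl x) := reach_of_edge hedge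
            rw [compIn_eq_of_mem_comps hE'symm hC hx] at hmem
            exact hmem
        by_cases hsize : 2 ≤ C₀.ncard
        · have hconn : ∀ x ∈ C₀, ∀ y ∈ C₀, Reach (E ∩ C₀ ×ˢ C₀) x y := by
            intro x hx y hy
            have hreach : Reach (KE E' A) (Sum.inl x) (Sum.inl y) := by
              have h1 : (Sum.inl y : W ⊕ W) ∈ compIn E' A (Sum.inl x) := by
                rw [compIn_eq_of_mem_comps hE'symm hC hx]; exact hy
              exact h1
            obtain ⟨m, hm⟩ := hreach
            have hm2 := walk_stays_in_comp hE'symm (subset_rfl) hm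
            rw [compIn_eq_of_mem_comps hE'symm hC hx,
              Set.inter_eq_self_of_subset_left (compsIn_subset hC)] at hm2
            exact ⟨m, walk_inl_transfer hCZ hm2⟩
          have hcut' := hcut C₀ hC₀Z hsize hconn
          refine hcut'.trans (Set.ncard_le_ncard ?_ (Set.toFinite _))
          rintro ⟨x, y⟩ ⟨hxy, hx, hy⟩
          rcases hclosure x hx y hxy with h | h
          · exact absurd h hy
          · exact ⟨hxy, hx, h⟩
        · have hone : C₀.ncard = 1 := by
            have : 0 < C₀.ncard := by rw [Set.ncard_pos]; exact hC₀ne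
            omega
          obtain ⟨z, hz⟩ := Set.ncard_eq_one.mp hone
          have hzC₀ : z ∈ C₀ := by rw [hz]; exact rfl
          have hzZ : z ∈ Z := hC₀Z hzC₀
          have hnbrsS : nbrs E z ⊆ S := by
            intro y hy
            rcases hclosure z hzC₀ y hy with h | h
            · exfalso
              rw [hz] at h
              cases h
              exact hirr z hy
            · exact h
          have himg : (fun y => (z, y)) '' (nbrs E z) ⊆ E ∩ (C₀ ×ˢ S) := by
            rintro _ ⟨y, hy, rfl⟩
            exact ⟨hy, hzC₀, hnbrsS hy⟩
          have h1 : ((fun y => (z, y)) '' (nbrs E z)).ncard = (nbrs E z).ncard :=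
            Set.ncard_image_of_injective _
              (fun a b hab => ((Prod.mk.injEq _ _ _ _).mp hab).2)
          have h2 : ((fun y => (z, y)) '' (nbrs E z)).ncard ≤ (E ∩ (C₀ ×ˢ S)).ncard :=
            Set.ncard_le_ncard himg (Set.toFinite _)
          have h3 : d ≤ (nbrs E z).ncard := hzZ
          omega
      -- counting
      set k := (oddComps E' A \ {Cstar}).ncard with hkdef
      have hdk : d * k ≤ d * S.ncard + 1 := by
        set g : Set (W ⊕ W) → Set (W × W) := fun C => E ∩ ((Sum.inl ⁻¹' C) ×ˢ S) with hgdef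
        have hCprop : ∀ C ∈ oddComps E' A \ {Cstar}, C ∈ compsIn E' A ∧ C ≠ Cstar := by
          rintro C ⟨hC1, hC2⟩
          exact ⟨hC1.1, fun h => hC2 (by rw [h]; exact rfl)⟩
        have hgd : ∀ C ∈ oddComps E' A \ {Cstar}, d ≤ (g C).ncard := by
          intro C hC
          obtain ⟨h1, h2⟩ := hCprop C hC
          exact hkey C h1 h2
        have hsamecomp : ∀ C ∈ oddComps E' A \ {Cstar}, ∀ C' ∈ oddComps E' A \ {Cstar},
            ∀ x : W, Sum.inl x ∈ C → Sum.inl x ∈ C' → C = C' := by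
          intro C hC C' hC' x hx hx'
          exact (compIn_eq_of_mem_comps hE'symm (hCprop C hC).1 hx).symm.trans
            (compIn_eq_of_mem_comps hE'symm (hCprop C' hC').1 hx')
        have hinj : Set.InjOn g (oddComps E' A \ {Cstar}) := by
          intro C hC C' hC' hgg
          have hne : (g C).Nonempty := by
            rw [← Set.ncard_pos (Set.toFinite _)]
            have := hgd C hC
            omega
          obtain ⟨⟨x, y⟩, hxy⟩ := hne
          have hxy' : (x, y) ∈ g C' := by rw [← hgg]; exact hxy
          exact hsamecomp C hC C' hC' x hxy.2.1 hxy'.2.1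
        have hpairwise : (g '' (oddComps E' A \ {Cstar})).Pairwise Disjoint := by
          rintro _ ⟨C, hC, rfl⟩ _ ⟨C', hC', rfl⟩ hne
          have hCC : C ≠ C' := fun h => hne (by rw [h])
          rw [Set.disjoint_left]
          rintro ⟨x, y⟩ hxy hxy'
          exact hCC (hsamecomp C hC C' hC' x hxy.2.1 hxy'.2.1)
        have hcards : ∀ D ∈ g '' (oddComps E' A \ {Cstar}), d ≤ D.ncard := by
          rintro _ ⟨C, hC, rfl⟩
          exact hgd C hC
        have hsub : ⋃₀ (g '' (oddComps E' A \ {Cstar})) ⊆ E ∩ (Set.univ ×ˢ S) := by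
          rintro ⟨x, y⟩ ⟨_, ⟨C, _, rfl⟩, hxy⟩
          exact ⟨hxy.1, Set.mem_univ _, hxy.2.2⟩
        have hfam := mul_ncard_le_ncard_of_disjoint d (g '' (oddComps E' A \ {Cstar}))
          (E ∩ (Set.univ ×ˢ S)) hpairwise hcards hsub
        rw [Set.ncard_image_of_injOn hinj] at hfam
        have hbound := edges_into_bound hsymm hdeg' hexc S
        rw [← hkdef] at hfam
        omega
      have hkS : k ≤ S.ncard := by
        by_contra hcon
        push_neg at hcon
        have h1 : d * (S.ncard + 1) ≤ d * k := Nat.mul_le_mul_left d hcon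
        rw [Nat.mul_add, Nat.mul_one] at h1
        omega
      have hoc : (oddComps E' A).ncard ≤ k + 1 := by
        have h1 : oddComps E' A ⊆ insert Cstar (oddComps E' A \ {Cstar}) := by
          intro C hC
          by_cases h : C = Cstar
          · exact Set.mem_insert_iff.mpr (Or.inl h)
          · exact Set.mem_insert_iff.mpr (Or.inr ⟨hC, h⟩)
        exact (Set.ncard_le_ncard h1 (Set.toFinite _)).trans (Set.ncard_insert_le _ _)
      by_cases hinr : ∃ a : W, Sum.inr a ∈ u
      · obtain ⟨a, ha⟩ := hinr
        have hins : insert (Sum.inr a : W ⊕ W) (Sum.inl '' S) ⊆ u :=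
          Set.insert_subset ha hSu
        have hinscard : (insert (Sum.inr a : W ⊕ W) (Sum.inl '' S)).ncard = S.ncard + 1 := by
          rw [Set.ncard_insert_of_notMem (by rintro ⟨w, _, h⟩; exact Sum.inl_ne_inr h),
            hScard]
        have := Set.ncard_le_ncard hins (Set.toFinite _)
        omega
      · push_neg at hinr
        have huS : u = Sum.inl '' S := by
          ext x
          cases x with
          | inl w =>
              simp only [Set.mem_image]
              constructor
              · intro h; exact ⟨w, h, rfl⟩
              · rintro ⟨w', hw', heq⟩
                rwa [← Sum.inl_injective heq]
          | inr a =>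
              simp only [Set.mem_image]
              constructor
              · intro h; exact absurd h (hinr a)
              · rintro ⟨w', _, heq⟩; exact absurd heq Sum.inl_ne_inr
        have hucard : u.ncard = S.ncard := by rw [huS, hScard]
        have hpar := parity_oddComps hE'symm A
        have hA : A.ncard = (Set.univ : Set (W ⊕ W)).ncard - u.ncard :=
          Set.ncard_diff (Set.subset_univ u)
        have hSnW : S.ncard ≤ (Set.univ : Set W).ncard :=
          Set.ncard_le_ncard (Set.subset_univ S) (Set.toFinite _)
        omega
  obtain ⟨M', hM'sub, hM'match, hM'cov⟩ :=
    tutte_raw hE'symm (Set.univ : Set (W ⊕ W)).ncard Set.univ rfl hcond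
  refine ⟨{q : W × W | (Sum.inl q.1, Sum.inl q.2) ∈ M'}, ?_, ⟨?_, ?_⟩, ?_⟩
  · rintro ⟨x, y⟩ h
    exact auxE_ll.mp (hM'sub h).1
  · intro x y h
    exact hM'match.1 _ _ h
  · intro x y z h1 h2
    exact Sum.inl_injective (hM'match.2 _ _ _ h1 h2)
  · intro z hz
    obtain ⟨y', hy'⟩ := hM'cov (Set.mem_univ (Sum.inl z : W ⊕ W))
    cases y' with
    | inl y => exact ⟨y, hy'⟩
    | inr a =>
        exfalso
        exact (auxE_lr.mp (hM'sub hy').1) hz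

end CLP
end

section
/- Let d ≥ 2 and let G be a finite bipartite graph in which every vertex has degree at most d, except at most one vertex of degree d + 1. Then G has a matching covering every vertex of degree at least d. -/
open MeasureTheory Set
open scoped ENNReal

namespace CLP

universe u

variable {V : Type u}

/-! ### Auxiliary machinery: functional chains of an injective partial map -/

section MatchAux

variable {W : Type u} {h : W → W} {A : Set W}

/-- A chain of length `m` from `b` to `a` following `h`, staying in `A` except possibly
at the last vertex. -/
def HChain (h : W → W) (A : Set W) (m : ℕ) (b a : W) : Prop :=
  (∀ i < m, h^[i] b ∈ A) ∧ h^[m] b = a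

/-- `a` lies on a cycle of the partial map `h` restricted to `A`. -/
def HCyc (h : W → W) (A : Set W) (a : W) : Prop := ∃ m, HChain h A (m + 1) a a

lemma hchain_zero (h : W → W) (A : Set W) (a : W) : HChain h A 0 a a :=
  ⟨fun i hi => absurd hi (Nat.not_lt_zero i), rfl⟩

lemma hchain_one {a : W} (ha : a ∈ A) : HChain h A 1 a (h a) := by
  refine ⟨fun i hi => ?_, rfl⟩
  interval_cases i
  exact ha

lemma hchain_trans {m n : ℕ} {b c a : W} (h1 : HChain h A m b c) (h2 : HChain h A n c a) :
    HChain h A (n + m) b a := by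
  refine ⟨fun i hi => ?_, ?_⟩
  · by_cases him : i < m
    · exact h1.1 i him
    · have hji : i - m < n := by omega
      have : h^[i] b = h^[i - m] (h^[m] b) := by
        rw [← Function.iterate_add_apply]
        congr 1; omega
      rw [this, h1.2]
      exact h2.1 _ hji
  · rw [Function.iterate_add_apply, h1.2, h2.2]

lemma hchain_peel_last {m : ℕ} {b a : W} (hc : HChain h A (m + 1) b a) :
    ∃ w, HChain h A m b w ∧ w ∈ A ∧ h w = a := by
  refine ⟨h^[m] b, ⟨fun i hi => hc.1 i (by omega), rfl⟩, hc.1 m (by omega), ?_⟩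
  rw [← Function.iterate_succ_apply' h m b]
  exact hc.2

lemma hchain_peel_first {m : ℕ} {b a : W} (hc : HChain h A (m + 1) b a) :
    b ∈ A ∧ HChain h A m (h b) a := by
  refine ⟨by simpa using hc.1 0 (by omega),
    show (∀ i < m, h^[i] (h b) ∈ A) ∧ h^[m] (h b) = a from ⟨fun i hi => ?_, ?_⟩⟩
  · have := hc.1 (i + 1) (by omega)
    rwa [Function.iterate_succ_apply] at this
  · have := hc.2
    rwa [Function.iterate_succ_apply] at this

lemma hcyc_mem {a : W} (hc : HCyc h A a) : a ∈ A := by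
  obtain ⟨m, hm⟩ := hc
  exact (hchain_peel_first hm).1

lemma hcyc_succ {a : W} (hc : HCyc h A a) : HCyc h A (h a) := by
  obtain ⟨m, hm⟩ := hc
  have h1 := hchain_peel_first hm
  have h2 : HChain h A 1 a (h a) := hchain_one (h := h) h1.1
  refine ⟨m, ?_⟩
  have := hchain_trans h1.2 h2
  simpa [Nat.add_comm] using this

lemma hcyc_chain {k : ℕ} {c a : W} (hc : HCyc h A c) (hch : HChain h A k c a) :
    HCyc h A a := by
  induction k generalizing c with
  | zero => rwa [show c = a from hch.2] at hc
  | succ n ih =>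
    have h1 := hchain_peel_first hch
    exact ih (hcyc_succ hc) h1.2

lemma hcyc_pred {a : W} (hc : HCyc h A a) : ∃ w, w ∈ A ∧ HCyc h A w ∧ h w = a := by
  obtain ⟨m, hm⟩ := hc
  obtain ⟨w, hw, hwA, hwa⟩ := hchain_peel_last hm
  refine ⟨w, hwA, ?_, hwa⟩
  have h1 : HChain h A 1 w a := by
    have := hchain_one (h := h) hwA
    rwa [hwa] at this
  exact ⟨m, by simpa using hchain_trans h1 hw⟩

lemma hchain_bound (hfin : Finite W) {m : ℕ} {b a : W} (hnc : ¬ HCyc h A a)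
    (hch : HChain h A m b a) : m + 1 ≤ Nat.card W := by
  classical
  letI : Fintype W := Fintype.ofFinite W
  rw [Nat.card_eq_fintype_card]
  have key : ∀ i j : ℕ, i < j → j ≤ m → h^[i] b ≠ h^[j] b := by
    intro i j hij hjm heq
    -- `c := h^[i] b` is cyclic
    have hcyc : HCyc h A (h^[i] b) := by
      refine ⟨j - i - 1, ⟨fun t ht => ?_, ?_⟩⟩
      · rw [← Function.iterate_add_apply]
        exact hch.1 (t + i) (by omega)
      · have : (j - i - 1 + 1) + i = j := by omega
        rw [← Function.iterate_add_apply]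
        rw [show j - i - 1 + 1 + i = j from this, ← heq]
    -- and there is a chain from it to `a`
    have htail : HChain h A (m - j) (h^[i] b) a := by
      refine ⟨fun t ht => ?_, ?_⟩
      · rw [heq, ← Function.iterate_add_apply]
        exact hch.1 (t + j) (by omega)
      · rw [heq, ← Function.iterate_add_apply, show m - j + j = m by omega]
        exact hch.2
    exact hnc (hcyc_chain hcyc htail)
  have hinj : Set.InjOn (fun i => h^[i] b) ↑(Finset.range (m + 1)) := by
    intro i hi j hj hij
    simp only [Finset.coe_range, Set.mem_Iio] at hi hj
    by_contra hne
    rcases Nat.lt_or_ge i j with hlt | hge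
    · exact key i j hlt (by omega) hij
    · exact key j i (by omega) (by omega) hij.symm
  calc m + 1 = (Finset.range (m + 1)).card := (Finset.card_range _).symm
    _ ≤ Finset.univ.card :=
        Finset.card_le_card_of_injOn _ (fun i _ => Finset.mem_univ _) hinj
    _ = Fintype.card W := Finset.card_univ

/-- The length of the longest `h`-chain ending at `a`. -/
noncomputable def ellF (h : W → W) (A : Set W) (a : W) : ℕ :=
  sSup {m | ∃ b, HChain h A m b a}

lemma ell_spec (hfin : Finite W) {a : W} (hnc : ¬ HCyc h A a) :
    (∃ b, HChain h A (ellF h A a) b a) ∧ ∀ m b, HChain h A m b a → m ≤ ellF h A a := by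
  have hne : {m | ∃ b, HChain h A m b a}.Nonempty := ⟨0, a, hchain_zero h A a⟩
  have hbdd : BddAbove {m | ∃ b, HChain h A m b a} := by
    refine ⟨Nat.card W, fun m hm => ?_⟩
    obtain ⟨b, hb⟩ := hm
    have := hchain_bound hfin hnc hb
    omega
  exact ⟨Nat.sSup_mem hne hbdd, fun m b hb => le_csSup hbdd ⟨b, hb⟩⟩

lemma ell_pred (hfin : Finite W) (hinj : Set.InjOn h A) {x z : W}
    (hnc : ¬ HCyc h A x) (hz : z ∈ A) (hzx : h z = x) :
    ellF h A x = ellF h A z + 1 := by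
  have hncz : ¬ HCyc h A z := fun hc => hnc (hzx ▸ hcyc_succ hc)
  have h1 : HChain h A 1 z x := by
    have := hchain_one (h := h) hz
    rwa [hzx] at this
  -- lower bound
  obtain ⟨b, hb⟩ := (ell_spec hfin hncz).1
  have hup : ellF h A z + 1 ≤ ellF h A x := by
    have h2 := hchain_trans hb h1
    rw [Nat.add_comm] at h2
    exact (ell_spec hfin hnc).2 _ _ h2
  -- upper bound
  have h1le : 1 ≤ ellF h A x := (ell_spec hfin hnc).2 1 z h1
  obtain ⟨c, hc⟩ := (ell_spec hfin hnc).1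
  obtain ⟨k, hk⟩ : ∃ k, ellF h A x = k + 1 := ⟨ellF h A x - 1, by omega⟩
  rw [hk] at hc
  obtain ⟨w, hw, hwA, hwx⟩ := hchain_peel_last hc
  have hwz : w = z := hinj hwA hz (hwx.trans hzx.symm)
  rw [hwz] at hw
  have : k ≤ ellF h A z := (ell_spec hfin hncz).2 k c hw
  omega

end MatchAux

/-- Let `d ≥ 2` and let `G` be a finite bipartite graph in which every
vertex has degree at most `d` except at most one vertex of degree `d + 1`. Then `G` has a
matching covering every vertex of degree at least `d`. -/
theorem matching_covering_high_degree_bipartite {W : Type u} (E : Set (W × W)) (d : ℕ)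
    (hd : 2 ≤ d) (hfin : Finite W) (hsymm : IsSymm E) (hirr : Irrefl E)
    (hdeg : MaxDegLE E (d + 1))
    (hexc : ∀ x y : W, d < (nbrs E x).ncard → d < (nbrs E y).ncard → x = y)
    (hbip : ∃ V₁ : Set W, ∀ p ∈ E, (p.1 ∈ V₁ ↔ p.2 ∉ V₁)) :
    ∃ M : Set (W × W), M ⊆ E ∧ IsMatching M ∧
      {z : W | d ≤ (nbrs E z).ncard} ⊆ coveredVerts M := by
  classical
  letI : Fintype W := Fintype.ofFinite W
  obtain ⟨V₁, hV₁⟩ := hbip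
  set A : Set W := {z : W | d ≤ (nbrs E z).ncard} with hA
  have hmemA : ∀ z : W, z ∈ A ↔ d ≤ (nbrs E z).ncard := fun z => Iff.rfl
  let nbrsF : W → Finset W := fun x => ((hdeg x).1).toFinset
  have hmemF : ∀ x y : W, y ∈ nbrsF x ↔ (x, y) ∈ E := by
    intro x y
    simp only [nbrsF, Set.Finite.mem_toFinset]
    rfl
  have hcardF : ∀ x : W, (nbrsF x).card = (nbrs E x).ncard :=
    fun x => (Set.ncard_eq_toFinset_card _ (hdeg x).1).symm
  have hsymmF : ∀ x y : W, y ∈ nbrsF x ↔ x ∈ nbrsF y := by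
    intro x y
    rw [hmemF, hmemF]
    exact ⟨fun hxy => hsymm x y hxy, fun hyx => hsymm y x hyx⟩
  -- Hall's condition for the set of high-degree vertices
  have hall : ∀ s : Finset ↥A, s.card ≤ (s.biUnion fun a => nbrsF a.1).card := by
    intro s
    set N := s.biUnion fun a => nbrsF a.1 with hN
    have h1 : s.card * d ≤ ∑ a ∈ s, (nbrsF a.1).card := by
      have hdle : ∀ a ∈ s, d ≤ (nbrsF a.1).card := by
        intro a _
        rw [hcardF]
        exact (hmemA a.1).mp a.2
      have := Finset.card_nsmul_le_sum s (fun a => (nbrsF a.1).card) d hdle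
      simpa [smul_eq_mul] using this
    have h2 : ∑ a ∈ s, (nbrsF a.1).card ≤ ∑ y ∈ N, (nbrsF y).card := by
      have hsub : ∀ a ∈ s, nbrsF a.1 ⊆ N := by
        intro a ha
        rw [hN]
        exact Finset.subset_biUnion_of_mem (fun a : ↥A => nbrsF a.1) ha
      have e1 : ∀ a ∈ s, (nbrsF a.1).card = (N.filter (fun y => y ∈ nbrsF a.1)).card := by
        intro a ha
        congr 1
        rw [Finset.filter_mem_eq_inter]
        exact (Finset.inter_eq_right.mpr (hsub a ha)).symm
      rw [Finset.sum_congr rfl e1]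
      simp_rw [Finset.card_filter]
      rw [Finset.sum_comm]
      refine Finset.sum_le_sum fun y _ => ?_
      rw [← Finset.card_filter]
      refine Finset.card_le_card_of_injOn (fun a => (a : W)) ?_ ?_
      · intro a ha
        rw [Finset.mem_coe, Finset.mem_filter] at ha
        exact (hsymmF _ _).mp ha.2
      · intro a _ b _ hab
        exact Subtype.ext hab
    have h3 : ∑ y ∈ N, (nbrsF y).card ≤ N.card * d + 1 := by
      have hle : ∀ y ∈ N, (nbrsF y).card ≤ d + (if d < (nbrs E y).ncard then 1 else 0) := by
        intro y _
        rw [hcardF]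
        split
        · have := (hdeg y).2
          omega
        · omega
      have hfilt : (N.filter (fun y => d < (nbrs E y).ncard)).card ≤ 1 := by
        refine Finset.card_le_one.mpr ?_
        intro y hy z hz
        rw [Finset.mem_filter] at hy hz
        exact hexc y z hy.2 hz.2
      calc ∑ y ∈ N, (nbrsF y).card
          ≤ ∑ y ∈ N, (d + if d < (nbrs E y).ncard then 1 else 0) := Finset.sum_le_sum hle
        _ = N.card * d + ∑ y ∈ N, (if d < (nbrs E y).ncard then 1 else 0) := by
            rw [Finset.sum_add_distrib, Finset.sum_const, smul_eq_mul]
        _ ≤ N.card * d + 1 := by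
            rw [← Finset.card_filter]
            omega
    have hcomb : s.card * d ≤ N.card * d + 1 := le_trans h1 (le_trans h2 h3)
    by_contra hlt
    push_neg at hlt
    have h4 : (N.card + 1) * d ≤ s.card * d := Nat.mul_le_mul_right _ (by omega)
    rw [add_mul, one_mul] at h4
    omega
  obtain ⟨f, finj, hf⟩ :=
    (Finset.all_card_le_biUnion_card_iff_exists_injective (fun a : ↥A => nbrsF a.1)).mp hall
  let h : W → W := fun x => if hx : x ∈ A then f ⟨x, hx⟩ else x
  have hval : ∀ (a : W) (ha : a ∈ A), h a = f ⟨a, ha⟩ := fun a ha => dif_pos ha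
  have hE : ∀ a ∈ A, (a, h a) ∈ E := by
    intro a ha
    rw [← hmemF, hval a ha]
    exact hf ⟨a, ha⟩
  have hinj : Set.InjOn h A := by
    intro a ha b hb hab
    rw [hval a ha, hval b hb] at hab
    exact congrArg Subtype.val (finj hab)
  set Good : W → Prop := fun a => a ∈ A ∧
    ((HCyc h A a ∧ a ∈ V₁) ∨ (¬ HCyc h A a ∧ Even (ellF h A a))) with hGood
  set M : Set (W × W) := {p | ∃ a, Good a ∧ (p = (a, h a) ∨ p = (h a, a))} with hM
  have hcontra : ∀ x z : W, Good x → Good z → h z = x → False := by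
    intro x z hGx hGz hzx
    have hEzx : (z, x) ∈ E := by
      rw [← hzx]
      exact hE z hGz.1
    have hbipzx : z ∈ V₁ ↔ x ∉ V₁ := hV₁ (z, x) hEzx
    rcases hGx.2 with ⟨hxc, hxV⟩ | ⟨hxnc, hxe⟩
    · obtain ⟨w, hwA, hwc, hwx⟩ := hcyc_pred hxc
      have hzw : z = w := hinj hGz.1 hwA (hzx.trans hwx.symm)
      rcases hGz.2 with ⟨_, hzV⟩ | ⟨hznc, _⟩
      · exact (hbipzx.mp hzV) hxV
      · exact hznc (hzw ▸ hwc)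
    · have hznc : ¬ HCyc h A z := fun hc => hxnc (hzx ▸ hcyc_succ hc)
      rcases hGz.2 with ⟨hzc, _⟩ | ⟨_, hze⟩
      · exact hznc hzc
      · have heq := ell_pred hfin hinj hxnc hGz.1 hzx
        obtain ⟨r, hr⟩ := hxe
        obtain ⟨t, ht⟩ := hze
        omega
  refine ⟨M, ?_, ⟨?_, ?_⟩, ?_⟩
  · rintro p ⟨a, hGa, hp | hp⟩ <;> subst hp
    · exact hE a hGa.1
    · exact hsymm _ _ (hE a hGa.1)
  · rintro x y ⟨a, hGa, hp | hp⟩ <;>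
      (rw [Prod.mk.injEq] at hp; obtain ⟨hp1, hp2⟩ := hp; subst hp1; subst hp2)
    · exact ⟨_, hGa, Or.inr rfl⟩
    · exact ⟨_, hGa, Or.inl rfl⟩
  · rintro x y z ⟨a, hGa, hp | hp⟩ ⟨b, hGb, hq | hq⟩ <;>
      (rw [Prod.mk.injEq] at hp hq; obtain ⟨hp1, hp2⟩ := hp; obtain ⟨hq1, hq2⟩ := hq)
    · have hab : a = b := hp1.symm.trans hq1
      rw [hp2, hq2, hab]
    · exact (hcontra a b (hp1 ▸ hGa) hGb (hq1.symm.trans hp1)).elim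
    · exact (hcontra b a hGb hGa (hp1.symm.trans hq1)).elim
    · have hab : a = b := hinj hGa.1 hGb.1 (hp1.symm.trans hq1)
      rw [hp2, hq2, hab]
  · intro a haA
    by_cases hGa : Good a
    · exact ⟨h a, a, hGa, Or.inl rfl⟩
    · by_cases hc : HCyc h A a
      · have haV : a ∉ V₁ := fun haV => hGa ⟨haA, Or.inl ⟨hc, haV⟩⟩
        obtain ⟨w, hwA, hwc, hwa⟩ := hcyc_pred hc
        have hEwa : (w, a) ∈ E := by
          rw [← hwa]
          exact hE w hwA
        have hwV : w ∈ V₁ := (hV₁ (w, a) hEwa).mpr haV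
        exact ⟨w, w, ⟨hwA, Or.inl ⟨hwc, hwV⟩⟩, Or.inr (by rw [hwa])⟩
      · have hodd : ¬ Even (ellF h A a) := fun he => hGa ⟨haA, Or.inr ⟨hc, he⟩⟩
        have hpos : ellF h A a ≠ 0 := fun h0 => hodd (by rw [h0]; exact Even.zero)
        obtain ⟨b, hb⟩ := (ell_spec hfin hc).1
        obtain ⟨k, hk⟩ : ∃ k, ellF h A a = k + 1 := ⟨ellF h A a - 1, by omega⟩
        rw [hk] at hb
        obtain ⟨w, hw, hwA, hwa⟩ := hchain_peel_last hb
        have hwnc : ¬ HCyc h A w := fun hcw => hc (hwa ▸ hcyc_succ hcw)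
        have heq := ell_pred hfin hinj hc hwA hwa
        have hwk : ellF h A w = k := by omega
        have hke : Even k := by
          by_contra hko
          exact hodd (hk ▸ (Nat.not_even_iff_odd.mp hko).add_one)
        exact ⟨w, w, ⟨hwA, Or.inr ⟨hwnc, hwk ▸ hke⟩⟩, Or.inr (by rw [hwa])⟩

end CLP
end

section
/- Let (V, 𝓑) be a standard Borel space with probability measure μ, and let E ⊆ V × V be a Borel symmetric irreflexive set of finite maximum degree that is generated, as in the definition of a graphing, by finitely many invertible μ-preserving Borel bijections φ_1, …, φ_k between Borel subsets of V. Then for all Borel sets A, B ⊆ V, ∫_A deg_B(x) dμ(x) = ∫_B deg_A(x) dμ(x), where deg_Y(x) denotes the number of edges from x to the set Y. -/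
open MeasureTheory Set
open scoped ENNReal

namespace CLP

universe u

variable {V : Type u}

/-! ### Auxiliary material for the mass-transport theorem -/

section Aux
variable [MeasurableSpace V] {μ : Measure V}

namespace PartialMPB

lemma image_eq (ψ : PartialMPB μ) {S : Set V} (hS : S ⊆ ψ.Dom) :
    ψ.toFun '' S = ψ.Ran ∩ ψ.invFun ⁻¹' S := by
  ext y
  constructor
  · rintro ⟨x, hx, rfl⟩
    exact ⟨ψ.mapsTo (hS hx), by simpa [ψ.left_inv x (hS hx)] using hx⟩
  · rintro ⟨hy, hy2⟩
    exact ⟨ψ.invFun y, hy2, ψ.right_inv y hy⟩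

lemma inv_image_eq (ψ : PartialMPB μ) {S : Set V} (hS : S ⊆ ψ.Ran) :
    ψ.invFun '' S = ψ.Dom ∩ ψ.toFun ⁻¹' S := by
  ext x
  constructor
  · rintro ⟨y, hy, rfl⟩
    exact ⟨ψ.mapsTo_inv (hS hy), by simpa [ψ.right_inv y (hS hy)] using hy⟩
  · rintro ⟨hx, hx2⟩
    exact ⟨ψ.toFun x, hx2, ψ.left_inv x hx⟩

lemma measure_inv_image (ψ : PartialMPB μ) {S : Set V} (hS : S ⊆ ψ.Ran)
    (hSm : MeasurableSet S) : μ (ψ.invFun '' S) = μ S := by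
  have h1 : ψ.invFun '' S = ψ.Dom ∩ ψ.toFun ⁻¹' S := ψ.inv_image_eq hS
  have hm : MeasurableSet (ψ.invFun '' S) := by
    rw [h1]; exact ψ.measDom.inter (ψ.meas_toFun hSm)
  have h2 : ψ.toFun '' (ψ.invFun '' S) = S := by
    ext y; constructor
    · rintro ⟨x, ⟨z, hz, rfl⟩, rfl⟩
      rwa [ψ.right_inv z (hS hz)]
    · intro hy
      exact ⟨ψ.invFun y, ⟨y, hy, rfl⟩, ψ.right_inv y (hS hy)⟩
  have h3 := ψ.measure_preserving (ψ.invFun '' S) (by rw [h1]; exact inter_subset_left) hm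
  rw [h2] at h3
  exact h3.symm

/-- The inverse of a partial measure-preserving bijection. -/
noncomputable def symm (ψ : PartialMPB μ) : PartialMPB μ where
  Dom := ψ.Ran
  Ran := ψ.Dom
  measDom := ψ.measRan
  measRan := ψ.measDom
  toFun := ψ.invFun
  invFun := ψ.toFun
  meas_toFun := ψ.meas_invFun
  meas_invFun := ψ.meas_toFun
  mapsTo := ψ.mapsTo_inv
  mapsTo_inv := ψ.mapsTo
  left_inv := ψ.right_inv
  right_inv := ψ.left_inv
  measure_preserving := fun _ hS hSm => ψ.measure_inv_image hS hSm

/-- The trivial (empty) partial measure-preserving bijection. -/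
def emptyPMPB (μ : Measure V) : PartialMPB μ where
  Dom := ∅
  Ran := ∅
  measDom := MeasurableSet.empty
  measRan := MeasurableSet.empty
  toFun := id
  invFun := id
  meas_toFun := measurable_id
  meas_invFun := measurable_id
  mapsTo := fun _ hx => hx
  mapsTo_inv := fun _ hx => hx
  left_inv := fun x hx => absurd hx (notMem_empty x)
  right_inv := fun x hx => absurd hx (notMem_empty x)
  measure_preserving := fun S _ _ => by rw [Set.image_id]

end PartialMPB
end Aux

theorem key_transport {V : Type u} [MeasurableSpace V] [StandardBorelSpace V]
    {μ : Measure V} (E : Set (V × V)) (measE : MeasurableSet E) (hsymm : IsSymm E)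
    (ψ : ℕ → PartialMPB μ) (N : ℕ)
    (hN : ∀ n, N ≤ n → (ψ n).Dom = ∅)
    (hcov : ∀ x y, (x, y) ∈ E → ∃ n, x ∈ (ψ n).Dom ∧ (ψ n).toFun x = y)
    (A B : Set V) (hA : MeasurableSet A) (hB : MeasurableSet B) :
    ∫⁻ x in A, (degIn E B x : ℝ≥0∞) ∂μ = ∫⁻ x in B, (degIn E A x : ℝ≥0∞) ∂μ := by
  classical
  set lab : V → V → ℕ := fun x y => sInf {n | x ∈ (ψ n).Dom ∧ (ψ n).toFun x = y} with hlab
  have hlab_mem : ∀ x y, (x, y) ∈ E →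
      x ∈ (ψ (lab x y)).Dom ∧ (ψ (lab x y)).toFun x = y := fun x y h =>
    Nat.sInf_mem (hcov x y h)
  have hlab_lt : ∀ x y, (x, y) ∈ E → lab x y < N := by
    intro x y h
    by_contra hc
    have h1 := (hlab_mem x y h).1
    rw [hN _ (le_of_not_gt hc)] at h1
    exact h1
  have hlab_min : ∀ x y m, m < lab x y → ¬ (x ∈ (ψ m).Dom ∧ (ψ m).toFun x = y) :=
    fun x y m hm hmem => absurd (Nat.sInf_le hmem) (not_le.2 hm)
  have hlab_eq : ∀ x y n, x ∈ (ψ n).Dom → (ψ n).toFun x = y →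
      (∀ m < n, ¬ (x ∈ (ψ m).Dom ∧ (ψ m).toFun x = y)) → lab x y = n := by
    intro x y n hdom heq hmin
    have hmem : n ∈ {m | x ∈ (ψ m).Dom ∧ (ψ m).toFun x = y} := ⟨hdom, heq⟩
    exact le_antisymm (Nat.sInf_le hmem)
      (le_csInf ⟨n, hmem⟩ fun m hm => not_lt.1 fun h => hmin m h hm)
  set C : ℕ → Set V := fun n => {x | x ∈ A ∧ x ∈ (ψ n).Dom ∧ (ψ n).toFun x ∈ B ∧
      (x, (ψ n).toFun x) ∈ E ∧
      ∀ m < n, ¬ (x ∈ (ψ m).Dom ∧ (ψ m).toFun x = (ψ n).toFun x)} with hC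
  set D : ℕ → Set V := fun n => (ψ n).Ran ∩ (ψ n).invFun ⁻¹' (C n) with hD
  have hCsubA : ∀ n, C n ⊆ A := fun n x hx => hx.1
  have hCsubDom : ∀ n, C n ⊆ (ψ n).Dom := fun n x hx => hx.2.1
  have hDsubB : ∀ n, D n ⊆ B := by
    rintro n y ⟨hyR, hyC⟩
    have h := hyC.2.2.1
    rwa [(ψ n).right_inv y hyR] at h
  -- measurability
  have measC : ∀ n, MeasurableSet (C n) := by
    intro n
    have heqf : ∀ m, MeasurableSet {x | (ψ m).toFun x = (ψ n).toFun x} := by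
      letI := upgradeStandardBorel V
      intro m
      have h := ((ψ m).meas_toFun.prodMk (ψ n).meas_toFun) isClosed_diagonal.measurableSet
      have hset : {x | (ψ m).toFun x = (ψ n).toFun x} =
          (fun x => ((ψ m).toFun x, (ψ n).toFun x)) ⁻¹' (Set.diagonal V) := by
        ext x; simp [Set.mem_diagonal_iff]
      rw [hset]; exact h
    have h1 : MeasurableSet {x | (x, (ψ n).toFun x) ∈ E} :=
      (measurable_id.prodMk (ψ n).meas_toFun) measE
    have h2 : MeasurableSet (⋂ m, ⋂ (_ : m < n),
        {x | x ∈ (ψ m).Dom ∧ (ψ m).toFun x = (ψ n).toFun x}ᶜ) :=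
      MeasurableSet.iInter fun m => MeasurableSet.iInter fun _ =>
        ((ψ m).measDom.inter (heqf m)).compl
    have hCe : C n = A ∩ (ψ n).Dom ∩ ((ψ n).toFun ⁻¹' B) ∩ {x | (x, (ψ n).toFun x) ∈ E} ∩
        ⋂ m, ⋂ (_ : m < n), {x | x ∈ (ψ m).Dom ∧ (ψ m).toFun x = (ψ n).toFun x}ᶜ := by
      ext x
      simp only [hC, mem_setOf_eq, mem_inter_iff, mem_preimage, mem_iInter, mem_compl_iff]
      tauto
    rw [hCe]
    exact (((hA.inter (ψ n).measDom).inter ((ψ n).meas_toFun hB)).inter h1).inter h2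
  have measD : ∀ n, MeasurableSet (D n) := fun n =>
    (ψ n).measRan.inter ((ψ n).meas_invFun (measC n))
  have hμCD : ∀ n, μ (D n) = μ (C n) := by
    intro n
    have h : D n = (ψ n).toFun '' (C n) := ((ψ n).image_eq (hCsubDom n)).symm
    rw [h]
    exact (ψ n).measure_preserving _ (hCsubDom n) (measC n)
  -- counting, A side
  have countA : ∀ x ∈ A, (nbrs E x ∩ B).ncard =
      ∑ n ∈ Finset.range N, if x ∈ C n then 1 else 0 := by
    intro x hxA
    have hinj : Set.InjOn (fun y => lab x y) (nbrs E x ∩ B) := by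
      intro y1 h1 y2 h2 he
      have e1 := (hlab_mem x y1 h1.1).2
      have e2 := (hlab_mem x y2 h2.1).2
      rw [← e1, ← e2]
      simp only at he
      rw [he]
    have himg : (fun y => lab x y) '' (nbrs E x ∩ B) =
        ↑((Finset.range N).filter fun n => x ∈ C n) := by
      ext n
      simp only [Finset.coe_filter, Finset.mem_range, mem_image, mem_setOf_eq, mem_inter_iff]
      constructor
      · rintro ⟨y, ⟨hyE, hyB⟩, rfl⟩
        have hm := hlab_mem x y hyE
        refine ⟨hlab_lt x y hyE, hxA, hm.1, ?_, ?_, ?_⟩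
        · rw [hm.2]; exact hyB
        · rw [hm.2]; exact hyE
        · intro m hlt hmem
          rw [hm.2] at hmem
          exact hlab_min x y m hlt hmem
      · rintro ⟨hn, hxA', hdom, hbB, hE, hmin⟩
        exact ⟨(ψ n).toFun x, ⟨hE, hbB⟩, hlab_eq x _ n hdom rfl hmin⟩
    calc (nbrs E x ∩ B).ncard = ((fun y => lab x y) '' (nbrs E x ∩ B)).ncard :=
          (Set.ncard_image_of_injOn hinj).symm
      _ = ((Finset.range N).filter fun n => x ∈ C n).card := by
          rw [himg, Set.ncard_coe_finset]
      _ = ∑ n ∈ Finset.range N, if x ∈ C n then 1 else 0 := Finset.card_filter _ _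
  -- counting, B side
  have countB : ∀ y ∈ B, (nbrs E y ∩ A).ncard =
      ∑ n ∈ Finset.range N, if y ∈ D n then 1 else 0 := by
    intro y hyB
    have hinj : Set.InjOn (fun x => lab x y) (nbrs E y ∩ A) := by
      intro x1 h1 x2 h2 he
      have hE1 : (x1, y) ∈ E := hsymm y x1 h1.1
      have hE2 : (x2, y) ∈ E := hsymm y x2 h2.1
      have m1 := hlab_mem x1 y hE1
      have m2 := hlab_mem x2 y hE2
      simp only at he
      set n1 := lab x1 y with hn1
      set n2 := lab x2 y with hn2
      have e1 : (ψ n1).invFun y = x1 := by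
        conv_lhs => rw [← m1.2]
        exact (ψ n1).left_inv x1 m1.1
      have e2 : (ψ n2).invFun y = x2 := by
        conv_lhs => rw [← m2.2]
        exact (ψ n2).left_inv x2 m2.1
      rw [← e1, ← e2, he]
    have himg : (fun x => lab x y) '' (nbrs E y ∩ A) =
        ↑((Finset.range N).filter fun n => y ∈ D n) := by
      ext n
      simp only [Finset.coe_filter, Finset.mem_range, mem_image, mem_setOf_eq, mem_inter_iff]
      constructor
      · rintro ⟨x, ⟨hxE, hxA⟩, rfl⟩
        have hE : (x, y) ∈ E := hsymm y x hxE
        have hm := hlab_mem x y hE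
        set n := lab x y with hn
        refine ⟨hlab_lt x y hE, ?_, ?_⟩
        · have hr := (ψ n).mapsTo hm.1
          rwa [hm.2] at hr
        · have hx' : (ψ n).invFun y = x := by
            conv_lhs => rw [← hm.2]
            exact (ψ n).left_inv x hm.1
          show (ψ n).invFun y ∈ C n
          rw [hx']
          refine ⟨hxA, hm.1, ?_, ?_, ?_⟩
          · rw [hm.2]; exact hyB
          · rw [hm.2]; exact hE
          · intro m hlt hmem
            rw [hm.2] at hmem
            exact hlab_min x y m hlt hmem
      · rintro ⟨hn, hyR, hyC⟩
        have hxC : (ψ n).invFun y ∈ C n := hyC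
        obtain ⟨hxA, hxdom, hxB, hxE, hxmin⟩ := hxC
        have htx : (ψ n).toFun ((ψ n).invFun y) = y := (ψ n).right_inv y hyR
        have hE : ((ψ n).invFun y, y) ∈ E := by rw [htx] at hxE; exact hxE
        refine ⟨(ψ n).invFun y, ⟨hsymm _ _ hE, hxA⟩, ?_⟩
        exact hlab_eq _ y n hxdom htx
          (fun m hlt hmem => hxmin m hlt ⟨hmem.1, hmem.2.trans htx.symm⟩)
    calc (nbrs E y ∩ A).ncard = ((fun x => lab x y) '' (nbrs E y ∩ A)).ncard :=
          (Set.ncard_image_of_injOn hinj).symm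
      _ = ((Finset.range N).filter fun n => y ∈ D n).card := by
          rw [himg, Set.ncard_coe_finset]
      _ = ∑ n ∈ Finset.range N, if y ∈ D n then 1 else 0 := Finset.card_filter _ _
  -- integrals
  have intA : ∫⁻ x in A, (degIn E B x : ℝ≥0∞) ∂μ = ∑ n ∈ Finset.range N, μ (C n) := by
    calc ∫⁻ x in A, (degIn E B x : ℝ≥0∞) ∂μ
        = ∫⁻ x in A, (∑ n ∈ Finset.range N,
            (C n).indicator (1 : V → ℝ≥0∞) x) ∂μ := by
          refine setLIntegral_congr_fun hA (fun x hx => ?_)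
          simp only [degIn]
          rw [countA x hx]
          push_cast
          refine Finset.sum_congr rfl fun n _ => ?_
          simp [Set.indicator_apply]
      _ = ∑ n ∈ Finset.range N, μ (C n) := by
          rw [lintegral_finset_sum _ fun n _ => measurable_one.indicator (measC n)]
          refine Finset.sum_congr rfl fun n _ => ?_
          rw [lintegral_indicator_one (measC n), Measure.restrict_apply (measC n),
            Set.inter_eq_self_of_subset_left (hCsubA n)]
  have intB : ∫⁻ y in B, (degIn E A y : ℝ≥0∞) ∂μ = ∑ n ∈ Finset.range N, μ (D n) := by
    calc ∫⁻ y in B, (degIn E A y : ℝ≥0∞) ∂μ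
        = ∫⁻ y in B, (∑ n ∈ Finset.range N,
            (D n).indicator (1 : V → ℝ≥0∞) y) ∂μ := by
          refine setLIntegral_congr_fun hB (fun y hy => ?_)
          simp only [degIn]
          rw [countB y hy]
          push_cast
          refine Finset.sum_congr rfl fun n _ => ?_
          simp [Set.indicator_apply]
      _ = ∑ n ∈ Finset.range N, μ (D n) := by
          rw [lintegral_finset_sum _ fun n _ => measurable_one.indicator (measD n)]
          refine Finset.sum_congr rfl fun n _ => ?_
          rw [lintegral_indicator_one (measD n), Measure.restrict_apply (measD n),
            Set.inter_eq_self_of_subset_left (hDsubB n)]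
  rw [intA, intB]
  exact Finset.sum_congr rfl fun n _ => (hμCD n).symm


/-- **mass transport.** In a graphing, for all Borel sets `A` and `B`,
`∫_A deg_B dμ = ∫_B deg_A dμ`. -/
theorem lintegral_degIn_symm {V : Type u} [MeasurableSpace V] [StandardBorelSpace V]
    (G : Graphing V) (A B : Set V) (hA : MeasurableSet A) (hB : MeasurableSet B) :
    ∫⁻ x in A, (degIn G.E B x : ℝ≥0∞) ∂G.μ = ∫⁻ x in B, (degIn G.E A x : ℝ≥0∞) ∂G.μ := by
  classical
  obtain ⟨k, φ, hgen⟩ := G.gen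
  set ψ : ℕ → PartialMPB G.μ := fun n =>
    if h : n < k then φ ⟨n, h⟩
    else if h' : n - k < k then (φ ⟨n - k, h'⟩).symm
    else PartialMPB.emptyPMPB G.μ with hψ
  refine key_transport G.E G.measE G.symm ψ (2 * k) ?_ ?_ A B hA hB
  · intro n hn
    have h1 : ¬ n < k := by omega
    have h2 : ¬ n - k < k := by omega
    simp only [hψ, dif_neg h1, dif_neg h2]
    rfl
  · intro x y hxy
    obtain ⟨hne, i, hi⟩ := (hgen x y).mp hxy
    rcases hi with ⟨hdom, heq⟩ | ⟨hdom, heq⟩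
    · have hval : ψ (i : ℕ) = φ i := by
        simp only [hψ, dif_pos i.isLt, Fin.eta]
      exact ⟨i, by rw [hval]; exact hdom, by rw [hval]; exact heq⟩
    · have h1 : ¬ (k + (i : ℕ) < k) := by omega
      have h2 : k + (i : ℕ) - k < k := by omega
      have hval : ψ (k + (i : ℕ)) = (φ i).symm := by
        simp only [hψ, dif_neg h1, dif_pos h2]
        have hfin : (⟨k + (i : ℕ) - k, h2⟩ : Fin k) = i := by
          apply Fin.ext; simp
        rw [hfin]
      refine ⟨k + (i : ℕ), ?_, ?_⟩
      · rw [hval]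
        show x ∈ (φ i).Ran
        rw [← heq]
        exact (φ i).mapsTo hdom
      · rw [hval]
        show (φ i).invFun x = y
        rw [← heq]
        exact (φ i).left_inv y hdom


end CLP
end

section
/- There exists a 2-regular graphing G = (V, 𝓑, E, μ) such that there is no μ-measurable orientation of E in which μ-almost every vertex has out-degree at most 1 and in-degree at most 1. -/
open MeasureTheory Set
open scoped ENNReal

namespace CLP

universe u

variable {V : Type u}

/-- There is a `2`-regular graphing on `V` admitting no `μ`-measurable orientation in which
almost every vertex has in-degree and out-degree at most `1`.  (A `μ`-measurable orientation
is encoded as a Borel set `F ⊆ E` which, off a `μ`-null set `Z` of vertices, contains exactly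
one of `(x, y)`, `(y, x)` for every edge `{x, y}`.) -/
def TwoRegularNoMeasOrientation (V : Type) [MeasurableSpace V] : Prop :=
  ∃ G : Graphing V,
    (∀ x : V, (nbrs G.E x).Finite ∧ (nbrs G.E x).ncard = 2) ∧
    ¬ ∃ (F : Set (V × V)) (Z : Set V),
        MeasurableSet F ∧ F ⊆ G.E ∧ MeasurableSet Z ∧ G.μ Z = 0 ∧
        (∀ x, x ∉ Z → ∀ y, y ∉ Z → (x, y) ∈ G.E → (((x, y) ∈ F) ↔ ((y, x) ∉ F))) ∧
        G.μ {x : V | 2 ≤ ({y | (x, y) ∈ F}).ncard ∨ 2 ≤ ({y | (y, x) ∈ F}).ncard} = 0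


/-! ### Auxiliary construction for Statement 17 -/

namespace Stmt17

noncomputable section

open Function

abbrev Circ : Type := AddCircle (1 : ℝ)

/-- The irrational rotation angle. -/
def alpha : Circ := ((Real.sqrt 2 : ℝ) : Circ)

lemma alpha_ne_zero : alpha ≠ 0 := by
  intro h
  rw [alpha, AddCircle.coe_eq_zero_iff] at h
  obtain ⟨n, hn⟩ := h
  apply irrational_sqrt_two
  exact ⟨(n : ℚ), by push_cast; rw [← hn]; simp⟩

lemma volume_singleton (x : Circ) : volume {x} = 0 := by
  have h := AddCircle.volume_closedBall (T := 1) (x := x) 0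
  have h2 : ({x} : Set Circ) ⊆ Metric.closedBall x 0 := by
    intro y hy; simp_all [Metric.mem_closedBall]
  refine le_antisymm ?_ (zero_le)
  calc volume ({x} : Set Circ) ≤ volume (Metric.closedBall x 0) := measure_mono h2
    _ = 0 := by rw [h]; norm_num

lemma denseRange_zsmul_alpha : DenseRange (· • alpha : ℤ → Circ) := by
  classical
  set H : AddSubgroup ℝ := AddSubgroup.closure {(1 : ℝ), Real.sqrt 2} with hH
  have hdense : Dense (H : Set ℝ) := by
    rcases AddSubgroup.dense_or_cyclic H with h | ⟨a, ha⟩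
    · exact h
    · exfalso
      have h1 : (1 : ℝ) ∈ H := AddSubgroup.subset_closure (by simp)
      have h2 : Real.sqrt 2 ∈ H := AddSubgroup.subset_closure (by simp)
      rw [ha, AddSubgroup.mem_closure_singleton] at h1 h2
      obtain ⟨n, hn⟩ := h1
      obtain ⟨m, hm⟩ := h2
      have hn0 : (n : ℝ) ≠ 0 := by
        intro h0
        rw [zsmul_eq_mul, h0, zero_mul] at hn
        norm_num at hn
      apply irrational_sqrt_two
      refine ⟨(m : ℚ) / (n : ℚ), ?_⟩
      rw [zsmul_eq_mul] at hn hm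
      have ha0 : a = 1 / n := by field_simp at hn ⊢; linarith [hn]
      push_cast
      rw [← hm, ha0]
      field_simp
  have hsurj : Surjective (QuotientAddGroup.mk : ℝ → Circ) :=
    QuotientAddGroup.mk'_surjective _
  have hcont : Continuous (QuotientAddGroup.mk : ℝ → Circ) := continuous_quotient_mk'
  have himg : Dense ((QuotientAddGroup.mk : ℝ → Circ) '' (H : Set ℝ)) :=
    hsurj.denseRange.dense_image hcont hdense
  have hsub : ((QuotientAddGroup.mk : ℝ → Circ) '' (H : Set ℝ)) ⊆
      Set.range (· • alpha : ℤ → Circ) := by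
    rintro _ ⟨r, hr, rfl⟩
    have : (r : Circ) ∈ AddSubgroup.zmultiples alpha := by
      have hmap : H.map (QuotientAddGroup.mk' (AddSubgroup.zmultiples (1:ℝ)))
          ≤ AddSubgroup.zmultiples alpha := by
        rw [hH, AddMonoidHom.map_closure]
        apply AddSubgroup.closure_le _ |>.mpr
        rintro _ ⟨s, hs, rfl⟩
        rcases hs with rfl | rfl
        · have : ((1 : ℝ) : Circ) = 0 := by
            simpa using (AddCircle.coe_period (p := (1:ℝ)))
          simp only [QuotientAddGroup.mk'_apply]
          rw [show ((QuotientAddGroup.mk (1:ℝ)) : Circ) = ((1:ℝ) : Circ) from rfl, this]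
          exact zero_mem _
        · exact AddSubgroup.mem_zmultiples _
      exact hmap ⟨r, hr, rfl⟩
    rw [AddSubgroup.mem_zmultiples_iff] at this
    obtain ⟨k, hk⟩ := this
    exact ⟨k, hk⟩
  intro x
  have := himg x
  exact closure_mono hsub this

lemma ergodic_alpha : Ergodic (alpha + ·) (volume : Measure Circ) :=
  ergodic_add_left_of_denseRange_zsmul denseRange_zsmul_alpha volume

/-- The bad (countable, null) set: points `x` with `2 • x ∈ ℤ • alpha`. -/
def S : Set Circ := ⋃ n : ℤ, (fun x : Circ => (2 : ℤ) • x) ⁻¹' {n • alpha}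

lemma mem_S_iff {x : Circ} : x ∈ S ↔ ∃ n : ℤ, (2 : ℤ) • x = n • alpha := by
  simp [S]

lemma measurableSet_S : MeasurableSet S := by
  apply MeasurableSet.iUnion
  intro n
  exact (measurable_const_smul ((2 : ℤ))) (measurableSet_singleton _)

lemma volume_S : volume S = 0 := by
  have hmp : MeasurePreserving (fun x : Circ => (2 : ℤ) • x) volume volume :=
    MeasureTheory.Measure.measurePreserving_zsmul volume (by norm_num)
  refine measure_iUnion_null fun n => ?_
  rw [hmp.measure_preimage (measurableSet_singleton _).nullMeasurableSet]
  exact volume_singleton _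

lemma neg_mem_S {x : Circ} (h : x ∈ S) : -x ∈ S := by
  rw [mem_S_iff] at h ⊢
  obtain ⟨n, hn⟩ := h
  exact ⟨-n, by rw [smul_neg, hn, neg_zsmul]⟩

lemma sub_mem_S {x : Circ} (h : x ∈ S) : alpha - x ∈ S := by
  rw [mem_S_iff] at h ⊢
  obtain ⟨n, hn⟩ := h
  refine ⟨2 - n, ?_⟩
  rw [smul_sub, hn, sub_zsmul]; abel

lemma neg_mem_S_iff {x : Circ} : -x ∈ S ↔ x ∈ S :=
  ⟨fun h => by simpa using neg_mem_S h, neg_mem_S⟩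

lemma sub_mem_S_iff {x : Circ} : alpha - x ∈ S ↔ x ∈ S :=
  ⟨fun h => by simpa using sub_mem_S h, sub_mem_S⟩

lemma add_self_ne_zero {x : Circ} (h : x ∉ S) : x + x ≠ 0 := by
  intro h0
  exact h (mem_S_iff.mpr ⟨0, by rw [two_zsmul, h0, zero_zsmul]⟩)

lemma add_self_ne_alpha {x : Circ} (h : x ∉ S) : x + x ≠ alpha := by
  intro h0
  exact h (mem_S_iff.mpr ⟨1, by rw [two_zsmul, h0, one_zsmul]⟩)

/-- The vertex set: the circle minus the bad set. -/
abbrev Vert : Type := ↥(Sᶜ)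

instance : StandardBorelSpace Vert := measurableSet_S.compl.standardBorel

lemma measurable_val : Measurable (Subtype.val : Vert → Circ) := measurable_subtype_coe

/-- The measurable embedding of the vertex set into the circle. -/
lemma emb : MeasurableEmbedding (Subtype.val : Vert → Circ) :=
  MeasurableEmbedding.subtype_coe measurableSet_S.compl

/-- The measure on the vertex set. -/
def muV : Measure Vert := (volume : Measure Circ).comap Subtype.val

lemma muV_apply (A : Set Vert) : muV A = volume (Subtype.val '' A) :=
  emb.comap_apply _ _

instance : IsProbabilityMeasure muV := by
  constructor
  rw [muV_apply, Set.image_univ, Subtype.range_coe]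
  rw [measure_compl measurableSet_S (measure_ne_top _ _), volume_S]
  simp [AddCircle.measure_univ]

/-- Negation on the vertex set. -/
def negV (v : Vert) : Vert := ⟨-v.1, fun h => v.2 (neg_mem_S_iff.mp h)⟩

/-- Reflection `x ↦ alpha - x` on the vertex set. -/
def tauV (v : Vert) : Vert := ⟨alpha - v.1, fun h => v.2 (sub_mem_S_iff.mp h)⟩

lemma measurable_negV : Measurable negV :=
  (measurable_val.neg).subtype_mk

lemma measurable_tauV : Measurable tauV :=
  (measurable_const.sub measurable_val).subtype_mk

lemma negV_involutive : Involutive negV := fun v => Subtype.ext (neg_neg _)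

lemma tauV_involutive : Involutive tauV := fun v => Subtype.ext (sub_sub_cancel _ _)

lemma image_negV (A : Set Vert) : negV '' A = negV ⁻¹' A := by
  rw [Set.image_eq_preimage_of_inverse negV_involutive negV_involutive]

lemma image_tauV (A : Set Vert) : tauV '' A = tauV ⁻¹' A := by
  rw [Set.image_eq_preimage_of_inverse tauV_involutive tauV_involutive]

lemma mp_neg : MeasurePreserving (Neg.neg : Circ → Circ) volume volume :=
  MeasureTheory.Measure.measurePreserving_neg volume

lemma mp_tau : MeasurePreserving (fun x : Circ => alpha - x) volume volume :=
  MeasureTheory.Measure.measurePreserving_sub_left volume alpha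

lemma mp_rot : MeasurePreserving (fun x : Circ => alpha + x) volume volume :=
  MeasureTheory.measurePreserving_add_left volume alpha

lemma mp_negrot : MeasurePreserving (fun x : Circ => -(alpha + x)) volume volume :=
  mp_neg.comp mp_rot

lemma muV_image_negV (A : Set Vert) (hA : MeasurableSet A) :
    muV (negV '' A) = muV A := by
  rw [muV_apply, muV_apply]
  have h1 : Subtype.val '' (negV '' A) = Neg.neg '' (Subtype.val '' A) := by
    rw [Set.image_image, Set.image_image]; rfl
  rw [h1, Set.image_eq_preimage_of_inverse (neg_neg : Involutive (Neg.neg : Circ → Circ))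
    (neg_neg : Involutive (Neg.neg : Circ → Circ))]
  exact mp_neg.measure_preimage (emb.measurableSet_image' hA).nullMeasurableSet

lemma muV_image_tauV (A : Set Vert) (hA : MeasurableSet A) :
    muV (tauV '' A) = muV A := by
  rw [muV_apply, muV_apply]
  have h1 : Subtype.val '' (tauV '' A) = (fun x : Circ => alpha - x) '' (Subtype.val '' A) := by
    rw [Set.image_image, Set.image_image]; rfl
  rw [h1, Set.image_eq_preimage_of_inverse (fun x : Circ => sub_sub_cancel alpha x)
    (fun x : Circ => sub_sub_cancel alpha x)]
  exact mp_tau.measure_preimage (emb.measurableSet_image' hA).nullMeasurableSet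

/-- The edge set. -/
def EV : Set (Vert × Vert) :=
  {p | (p.2 : Circ) + (p.1 : Circ) = 0 ∨ (p.2 : Circ) + (p.1 : Circ) = alpha}

lemma measurableSet_EV : MeasurableSet EV := by
  have hf : Measurable (fun p : Vert × Vert => (p.2 : Circ) + (p.1 : Circ)) :=
    (measurable_val.comp measurable_snd).add (measurable_val.comp measurable_fst)
  have : EV = (fun p : Vert × Vert => (p.2 : Circ) + (p.1 : Circ)) ⁻¹' {0} ∪
      (fun p : Vert × Vert => (p.2 : Circ) + (p.1 : Circ)) ⁻¹' {alpha} := by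
    ext p; simp [EV]
  rw [this]
  exact (hf (measurableSet_singleton _)).union (hf (measurableSet_singleton _))

lemma symm_EV : IsSymm EV := by
  intro x y h
  rcases h with h | h
  · exact Or.inl (by show (x : Circ) + y = 0; rw [add_comm]; exact h)
  · exact Or.inr (by show (x : Circ) + y = alpha; rw [add_comm]; exact h)

lemma irrefl_EV : Irrefl EV := by
  intro v h
  rcases h with h | h
  · exact add_self_ne_zero v.2 h
  · exact add_self_ne_alpha v.2 h

lemma mem_EV_negV (v : Vert) : (v, negV v) ∈ EV :=
  Or.inl (by show -(v : Circ) + v = 0; simp)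

lemma mem_EV_tauV (v : Vert) : (v, tauV v) ∈ EV :=
  Or.inr (by show alpha - (v : Circ) + v = alpha; abel)

lemma mem_EV_iff {v w : Vert} : (v, w) ∈ EV ↔ w = negV v ∨ w = tauV v := by
  constructor
  · rintro (h | h)
    · left; apply Subtype.ext
      show (w : Circ) = -(v : Circ)
      rw [eq_neg_iff_add_eq_zero]; exact h
    · right; apply Subtype.ext
      show (w : Circ) = alpha - (v : Circ)
      rw [eq_sub_iff_add_eq]; exact h
  · rintro (rfl | rfl)
    · exact mem_EV_negV v
    · exact mem_EV_tauV v

lemma negV_ne_tauV (v : Vert) : negV v ≠ tauV v := by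
  intro h
  have h1 : -(v : Circ) = alpha - v := Subtype.ext_iff.mp h
  have h2 := congrArg (· + (v : Circ)) h1
  simp only [neg_add_cancel, sub_add_cancel] at h2
  exact alpha_ne_zero h2.symm

lemma nbrs_EV (v : Vert) : nbrs EV v = {negV v, tauV v} := by
  ext w
  rw [nbrs, Set.mem_setOf_eq, mem_EV_iff]
  simp [Set.mem_insert_iff]

lemma nbrs_EV_finite (v : Vert) : (nbrs EV v).Finite := by
  rw [nbrs_EV]; exact (Set.finite_singleton _).insert _

lemma nbrs_EV_ncard (v : Vert) : (nbrs EV v).ncard = 2 := by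
  rw [nbrs_EV]; exact Set.ncard_pair (negV_ne_tauV v)

/-- The negation map as a `PartialMPB`. -/
def phiNeg : PartialMPB muV where
  Dom := Set.univ
  Ran := Set.univ
  measDom := MeasurableSet.univ
  measRan := MeasurableSet.univ
  toFun := negV
  invFun := negV
  meas_toFun := measurable_negV
  meas_invFun := measurable_negV
  mapsTo := fun _ _ => Set.mem_univ _
  mapsTo_inv := fun _ _ => Set.mem_univ _
  left_inv := fun x _ => negV_involutive x
  right_inv := fun x _ => negV_involutive x
  measure_preserving := fun A _ hA => muV_image_negV A hA

/-- The reflection map as a `PartialMPB`. -/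
def phiTau : PartialMPB muV where
  Dom := Set.univ
  Ran := Set.univ
  measDom := MeasurableSet.univ
  measRan := MeasurableSet.univ
  toFun := tauV
  invFun := tauV
  meas_toFun := measurable_tauV
  meas_invFun := measurable_tauV
  mapsTo := fun _ _ => Set.mem_univ _
  mapsTo_inv := fun _ _ => Set.mem_univ _
  left_inv := fun x _ => tauV_involutive x
  right_inv := fun x _ => tauV_involutive x
  measure_preserving := fun A _ hA => muV_image_tauV A hA

/-- The graphing. -/
def Gr : Graphing Vert where
  μ := muV
  prob := inferInstance
  E := EV
  measE := measurableSet_EV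
  symm := symm_EV
  irrefl := irrefl_EV
  bddDeg := ⟨2, fun v => ⟨nbrs_EV_finite v, le_of_eq (nbrs_EV_ncard v)⟩⟩
  gen := by
    refine ⟨2, ![phiNeg, phiTau], ?_⟩
    intro v w
    constructor
    · intro h
      refine ⟨?_, ?_⟩
      · rintro rfl; exact irrefl_EV v h
      · rcases mem_EV_iff.mp h with rfl | rfl
        · exact ⟨0, Or.inl ⟨Set.mem_univ _, rfl⟩⟩
        · exact ⟨1, Or.inl ⟨Set.mem_univ _, rfl⟩⟩
    · rintro ⟨-, i, hi⟩
      fin_cases i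
      · rcases hi with ⟨-, rfl⟩ | ⟨-, h⟩
        · exact mem_EV_negV v
        · have : w = negV v := by
            rw [← h]; exact (negV_involutive.eq_iff.mpr rfl) ▸
              (Subtype.ext (by simp [phiNeg, negV, ← Subtype.ext_iff.mp h]))
          exact this ▸ mem_EV_negV v
      · rcases hi with ⟨-, rfl⟩ | ⟨-, h⟩
        · exact mem_EV_tauV v
        · have : w = tauV v := by
            apply Subtype.ext
            have hval : alpha - (w : Circ) = v := Subtype.ext_iff.mp h
            show (w : Circ) = alpha - v
            rw [← hval]; abel
          exact this ▸ mem_EV_tauV v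

end

end Stmt17

/-- There exists a `2`-regular graphing with no `μ`-measurable
orientation having almost everywhere in- and out-degree at most `1`. -/
theorem exists_twoRegular_graphing_no_measurable_orientation :
    ∃ (V : Type) (inst : MeasurableSpace V),
      @StandardBorelSpace V inst ∧ @TwoRegularNoMeasOrientation V inst := by
  classical
  refine ⟨Stmt17.Vert, inferInstance, inferInstance, Stmt17.Gr, ?_, ?_⟩
  · intro v
    exact ⟨Stmt17.nbrs_EV_finite v, Stmt17.nbrs_EV_ncard v⟩
  · rintro ⟨F, Z, hFmeas, hFE, hZmeas, hZnull, hExact, hDegNull⟩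
    -- notation
    open Stmt17 in
    set T : Circ → Circ := fun x => alpha + x with hT
    -- the `F`-oriented set downstairs
    set A : Set Circ := Subtype.val '' {v : Stmt17.Vert | (v, Stmt17.negV v) ∈ F} with hA
    have hAmeas : MeasurableSet A := by
      apply Stmt17.emb.measurableSet_image'
      exact (measurable_id.prodMk Stmt17.measurable_negV) hFmeas
    have hAsub : A ⊆ Stmt17.Sᶜ := by
      rintro _ ⟨v, -, rfl⟩; exact v.2
    -- membership criterion for A
    have hmemA : ∀ (x : Circ) (hx : x ∈ Stmt17.Sᶜ),
        x ∈ A ↔ (⟨x, hx⟩, Stmt17.negV ⟨x, hx⟩) ∈ F := by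
      intro x hx
      constructor
      · rintro ⟨v, hv, hval⟩
        have : v = ⟨x, hx⟩ := Subtype.ext hval
        rwa [this] at hv
      · intro h; exact ⟨⟨x, hx⟩, h, rfl⟩
    -- measurable null supersets of the images of Z and the bad-degree set
    have hZ'ex : ∃ Z' : Set Circ, Subtype.val '' Z ⊆ Z' ∧ MeasurableSet Z' ∧ volume Z' = 0 := by
      apply exists_measurable_superset_of_null
      rw [← Stmt17.muV_apply]; exact hZnull
    obtain ⟨Z', hZ'sub, hZ'meas, hZ'null⟩ := hZ'ex
    set D : Set Stmt17.Vert :=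
      {x | 2 ≤ ({y | (x, y) ∈ F}).ncard ∨ 2 ≤ ({y | (y, x) ∈ F}).ncard} with hD
    have hD'ex : ∃ D' : Set Circ, Subtype.val '' D ⊆ D' ∧ MeasurableSet D' ∧ volume D' = 0 := by
      apply exists_measurable_superset_of_null
      rw [← Stmt17.muV_apply]; exact hDegNull
    obtain ⟨D', hD'sub, hD'meas, hD'null⟩ := hD'ex
    -- the combined bad set and its translates
    set B : Set Circ := Stmt17.S ∪ Z' ∪ D' with hB
    have hBmeas : MeasurableSet B :=
      (Stmt17.measurableSet_S.union hZ'meas).union hD'meas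
    have hBnull : volume B = 0 := by
      refine measure_union_null (measure_union_null Stmt17.volume_S hZ'null) hD'null
    set N : Set Circ := B ∪ (Neg.neg ⁻¹' B) ∪ ((fun x : Circ => alpha + x) ⁻¹' B) ∪
      ((fun x : Circ => -(alpha + x)) ⁻¹' B) with hN
    have hNnull : volume N = 0 := by
      refine measure_union_null (measure_union_null (measure_union_null hBnull ?_) ?_) ?_
      · exact Stmt17.mp_neg.measure_preimage hBmeas.nullMeasurableSet ▸ hBnull
      · exact Stmt17.mp_rot.measure_preimage hBmeas.nullMeasurableSet ▸ hBnull
      · exact Stmt17.mp_negrot.measure_preimage hBmeas.nullMeasurableSet ▸ hBnull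
    -- helper: vertex-level facts from circle-level good points
    have hvalZ : ∀ v : Stmt17.Vert, (v : Circ) ∉ Z' → v ∉ Z := by
      intro v hv hvZ; exact hv (hZ'sub ⟨v, hvZ, rfl⟩)
    have hvalD : ∀ v : Stmt17.Vert, (v : Circ) ∉ D' → v ∉ D := by
      intro v hv hvD; exact hv (hD'sub ⟨v, hvD, rfl⟩)
    have hOne : ∀ v w : Stmt17.Vert, (v : Circ) ∉ Z' → (w : Circ) ∉ Z' →
        (v, w) ∈ Stmt17.EV → ((v, w) ∈ F ↔ (w, v) ∉ F) := by
      intro v w hv hw he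
      exact hExact v (hvalZ v hv) w (hvalZ w hw) he
    have hOut : ∀ v w w' : Stmt17.Vert, (v : Circ) ∉ D' →
        (v, w) ∈ F → (v, w') ∈ F → w = w' := by
      intro v w w' hv hw hw'
      by_contra hne
      apply hvalD v hv
      left
      have hfin : ({y | (v, y) ∈ F}).Finite := by
        apply (Stmt17.nbrs_EV_finite v).subset
        intro y hy
        exact hFE hy
      exact (Set.one_lt_ncard hfin).mpr ⟨w, hw, w', hw', hne⟩
    have hIn : ∀ v w w' : Stmt17.Vert, (v : Circ) ∉ D' →
        (w, v) ∈ F → (w', v) ∈ F → w = w' := by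
      intro v w w' hv hw hw'
      by_contra hne
      apply hvalD v hv
      right
      have hfin : ({y | (y, v) ∈ F}).Finite := by
        apply (Stmt17.nbrs_EV_finite v).subset
        intro y hy
        exact Stmt17.symm_EV y v (hFE hy)
      exact (Set.one_lt_ncard hfin).mpr ⟨w, hw, w', hw', hne⟩
    -- the key step: off the null set N, membership in A is invariant under rotation
    have hStep : ∀ x : Circ, x ∉ N → (x ∈ A ↔ alpha + x ∈ A) := by
      intro x hxN
      have hxB : x ∉ B := fun h => hxN (Or.inl (Or.inl (Or.inl h)))
      have hnxB : -x ∉ B := fun h => hxN (Or.inl (Or.inl (Or.inr h)))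
      have hyB : alpha + x ∉ B := fun h => hxN (Or.inl (Or.inr h))
      have hnyB : -(alpha + x) ∉ B := fun h => hxN (Or.inr h)
      have hSx : x ∉ Stmt17.S := fun h => hxB (Or.inl (Or.inl h))
      have hZx : x ∉ Z' := fun h => hxB (Or.inl (Or.inr h))
      have hSnx : -x ∉ Stmt17.S := fun h => hnxB (Or.inl (Or.inl h))
      have hZnx : -x ∉ Z' := fun h => hnxB (Or.inl (Or.inr h))
      have hDnx : -x ∉ D' := fun h => hnxB (Or.inr h)
      have hSy : alpha + x ∉ Stmt17.S := fun h => hyB (Or.inl (Or.inl h))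
      have hZy : alpha + x ∉ Z' := fun h => hyB (Or.inl (Or.inr h))
      have hDy : alpha + x ∉ D' := fun h => hyB (Or.inr h)
      have hSny : -(alpha + x) ∉ Stmt17.S := fun h => hnyB (Or.inl (Or.inl h))
      have hZny : -(alpha + x) ∉ Z' := fun h => hnyB (Or.inl (Or.inr h))
      set vx : Stmt17.Vert := ⟨x, hSx⟩ with hvx
      set nx : Stmt17.Vert := ⟨-x, hSnx⟩ with hnx
      set vy : Stmt17.Vert := ⟨alpha + x, hSy⟩ with hvy
      set ny : Stmt17.Vert := ⟨-(alpha + x), hSny⟩ with hny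
      have hnegvx : Stmt17.negV vx = nx := Subtype.ext rfl
      have hnegvy : Stmt17.negV vy = ny := Subtype.ext rfl
      have e1 : (vx, nx) ∈ Stmt17.EV := Or.inl (by show -x + x = 0; simp)
      have e2 : (nx, vy) ∈ Stmt17.EV := Or.inr (by show (alpha + x) + -x = alpha; abel)
      have e2s : (vy, nx) ∈ Stmt17.EV := Stmt17.symm_EV _ _ e2
      have e3 : (vy, ny) ∈ Stmt17.EV := Or.inl (by show -(alpha + x) + (alpha + x) = 0; abel)
      have hxy : vx ≠ vy := by
        intro h
        have h1 : x = alpha + x := Subtype.ext_iff.mp h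
        exact Stmt17.alpha_ne_zero (right_eq_add.mp h1)
      have hnxny : nx ≠ ny := by
        intro h
        exact hxy (Subtype.ext (neg_inj.mp (Subtype.ext_iff.mp h)))
      constructor
      · intro hxA
        have hF1 : (vx, nx) ∈ F := by
          have h0 := (hmemA x hSx).mp hxA
          rwa [hnegvx] at h0
        have hF2 : (vy, nx) ∉ F := fun h => hxy (hIn nx vx vy hDnx hF1 h)
        have hF3 : (nx, vy) ∈ F := (hOne nx vy hZnx hZy e2).mpr hF2
        have hF4 : (ny, vy) ∉ F := fun h => hnxny (hIn vy nx ny hDy hF3 h)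
        have hF5 : (vy, ny) ∈ F := (hOne vy ny hZy hZny e3).mpr hF4
        apply (hmemA (alpha + x) hSy).mpr
        rwa [hnegvy]
      · intro hyA
        have hF1 : (vy, ny) ∈ F := by
          have h0 := (hmemA (alpha + x) hSy).mp hyA
          rwa [hnegvy] at h0
        have hF2 : (vy, nx) ∉ F := fun h => hnxny (hOut vy ny nx hDy hF1 h).symm
        have hF3 : (nx, vy) ∈ F := by
          by_contra hc
          exact hF2 ((hOne vy nx hZy hZnx e2s).mpr hc)
        have hF4 : (nx, vx) ∉ F := fun h => hxy (hOut nx vy vx hDnx hF3 h).symm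
        have hF5 : (vx, nx) ∈ F := (hOne vx nx hZx hZnx e1).mpr hF4
        apply (hmemA x hSx).mpr
        rwa [hnegvx]
    -- A is a.e. invariant under the ergodic rotation
    have hTpre : (fun x : Circ => alpha + x) ⁻¹' A =ᵐ[volume] A := by
      rw [Filter.eventuallyEq_set]
      have hN' : ∀ᵐ x ∂(volume : Measure Circ), x ∉ N :=
        (MeasureTheory.measure_eq_zero_iff_ae_notMem).mp hNnull
      filter_upwards [hN'] with x hx
      exact (hStep x hx).symm
    rcases Stmt17.ergodic_alpha.quasiErgodic.ae_empty_or_univ₀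
        hAmeas.nullMeasurableSet hTpre with hcase | hcase
    · -- A is null: almost no vertex has its `neg`-edge oriented outwards
      have hAnull : volume A = 0 := ae_eq_empty.mp hcase
      set U : Set Circ := A ∪ (Neg.neg ⁻¹' A) ∪ N with hU
      have hUnull : volume U = 0 := by
        refine measure_union_null (measure_union_null hAnull ?_) hNnull
        exact Stmt17.mp_neg.measure_preimage hAmeas.nullMeasurableSet ▸ hAnull
      have hUne : U ≠ Set.univ := by
        intro h
        have h2 : (volume : Measure Circ) Set.univ = 0 := h ▸ hUnull
        rw [AddCircle.measure_univ] at h2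
        norm_num at h2
      obtain ⟨x, hxU⟩ := (Set.ne_univ_iff_exists_notMem U).mp hUne
      have hxA : x ∉ A := fun h => hxU (Or.inl (Or.inl h))
      have hnxA : -x ∉ A := fun h => hxU (Or.inl (Or.inr h))
      have hxN : x ∉ N := fun h => hxU (Or.inr h)
      have hxB : x ∉ B := fun h => hxN (Or.inl (Or.inl (Or.inl h)))
      have hnxB : -x ∉ B := fun h => hxN (Or.inl (Or.inl (Or.inr h)))
      have hSx : x ∉ Stmt17.S := fun h => hxB (Or.inl (Or.inl h))
      have hZx : x ∉ Z' := fun h => hxB (Or.inl (Or.inr h))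
      have hSnx : -x ∉ Stmt17.S := fun h => hnxB (Or.inl (Or.inl h))
      have hZnx : -x ∉ Z' := fun h => hnxB (Or.inl (Or.inr h))
      set vx : Stmt17.Vert := ⟨x, hSx⟩ with hvx
      set nx : Stmt17.Vert := ⟨-x, hSnx⟩ with hnx
      have hnegvx : Stmt17.negV vx = nx := Subtype.ext rfl
      have hnegnx : Stmt17.negV nx = vx := Subtype.ext (neg_neg x)
      have e1 : (vx, nx) ∈ Stmt17.EV := Or.inl (by show -x + x = 0; simp)
      have hF1 : (vx, nx) ∉ F := by
        intro h
        apply hxA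
        apply (hmemA x hSx).mpr
        rwa [hnegvx]
      have hF2 : (nx, vx) ∉ F := by
        intro h
        apply hnxA
        apply (hmemA (-x) hSnx).mpr
        rwa [hnegnx]
      exact hF1 ((hOne vx nx hZx hZnx e1).mpr hF2)
    · -- A is conull: almost every vertex has its `neg`-edge oriented outwards
      have hAcnull : volume Aᶜ = 0 := ae_eq_univ.mp hcase
      set U : Set Circ := Aᶜ ∪ (Neg.neg ⁻¹' Aᶜ) ∪ N with hU
      have hUnull : volume U = 0 := by
        refine measure_union_null (measure_union_null hAcnull ?_) hNnull
        exact Stmt17.mp_neg.measure_preimage hAmeas.compl.nullMeasurableSet ▸ hAcnull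
      have hUne : U ≠ Set.univ := by
        intro h
        have h2 : (volume : Measure Circ) Set.univ = 0 := h ▸ hUnull
        rw [AddCircle.measure_univ] at h2
        norm_num at h2
      obtain ⟨x, hxU⟩ := (Set.ne_univ_iff_exists_notMem U).mp hUne
      have hxA : x ∈ A := by
        by_contra h; exact hxU (Or.inl (Or.inl h))
      have hnxA : -x ∈ A := by
        by_contra h; exact hxU (Or.inl (Or.inr h))
      have hxN : x ∉ N := fun h => hxU (Or.inr h)
      have hxB : x ∉ B := fun h => hxN (Or.inl (Or.inl (Or.inl h)))
      have hnxB : -x ∉ B := fun h => hxN (Or.inl (Or.inl (Or.inr h)))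
      have hSx : x ∉ Stmt17.S := fun h => hxB (Or.inl (Or.inl h))
      have hZx : x ∉ Z' := fun h => hxB (Or.inl (Or.inr h))
      have hSnx : -x ∉ Stmt17.S := fun h => hnxB (Or.inl (Or.inl h))
      have hZnx : -x ∉ Z' := fun h => hnxB (Or.inl (Or.inr h))
      set vx : Stmt17.Vert := ⟨x, hSx⟩ with hvx
      set nx : Stmt17.Vert := ⟨-x, hSnx⟩ with hnx
      have hnegvx : Stmt17.negV vx = nx := Subtype.ext rfl
      have hnegnx : Stmt17.negV nx = vx := Subtype.ext (neg_neg x)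
      have e1 : (vx, nx) ∈ Stmt17.EV := Or.inl (by show -x + x = 0; simp)
      have hF1 : (vx, nx) ∈ F := by
        have h0 := (hmemA x hSx).mp hxA
        rwa [hnegvx] at h0
      have hF2 : (nx, vx) ∈ F := by
        have h0 := (hmemA (-x) hSnx).mp hnxA
        rwa [hnegnx] at h0
      exact ((hOne vx nx hZx hZnx e1).mp hF1) hF2


end CLP
end
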